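/- arXiv:2312.01969 — 4 statements merged into one kernel-verified Lean document; each statement's English description precedes it below -/
import Mathlib

section
/- Let Z_1,…,Z_n be i.i.d. with distribution P0 and let X_1,…,X_m be independent random variables, independent of (Z_1,…,Z_n), of which the m0 variables indexed by the null set H0 have distribution P0; assume the score distribution under P0 is atomless. For each i let p̂_i be the empirical p-value of X_i computed using the single shared calibration set {Z_1,…,Z_n}. If there exists an integer ℓ ≥ 1 with ℓm/α an integer and n = ℓm/α − 1, then the BH procedure at level α applied to (p̂_1,…,p̂_m) achieves exact FDR control: FDR = m0·α/m. -/
open MeasureTheory ProbabilityTheory Finset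
open scoped Classical ENNReal

/-- Hypothesis `i` is rejected by the Benjamini–Hochberg procedure at level `α`. -/
def bhRejects (m : ℕ) (α : ℝ) (p : Fin m → ℝ) (i : Fin m) : Prop :=
  ∃ k ∈ Finset.Icc 1 m,
    p i ≤ α * k / m ∧
      k ≤ (Finset.univ.filter fun j => p j ≤ α * (k : ℝ) / m).card

/-- Number of rejections of the BH procedure at level `α`. -/
noncomputable def bhR (m : ℕ) (α : ℝ) (p : Fin m → ℝ) : ℕ :=
  (Finset.univ.filter fun i => bhRejects m α p i).card

/-- Number of false positives (rejected null hypotheses) of BH at level `α`. -/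
noncomputable def bhFP (m : ℕ) (α : ℝ) (H0 : Finset (Fin m)) (p : Fin m → ℝ) : ℕ :=
  (H0.filter fun i => bhRejects m α p i).card

/-- False discovery proportion of BH at level `α` (with the convention 0/0 = 0). -/
noncomputable def bhFDP (m : ℕ) (α : ℝ) (H0 : Finset (Fin m)) (p : Fin m → ℝ) : ℝ :=
  (bhFP m α H0 p : ℝ) / (bhR m α p : ℝ)

/-- Empirical p-value of a point `x` with respect to the calibration set `z`. -/
noncomputable def empPval {𝒳 : Type*} (n : ℕ) (a : 𝒳 → ℝ) (x : 𝒳) (z : Fin n → 𝒳) : ℝ :=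
  (1 / (n : ℝ)) * ∑ u : Fin n, if a x ≤ a (z u) then (1 : ℝ) else 0

namespace BHAux

/-- count of calibration values above the score of test point `j` -/
noncomputable def cnt {m n : ℕ} (s : Fin m → ℝ) (t : Fin n → ℝ) (j : Fin m) : ℕ :=
  (Finset.univ.filter fun u => s j ≤ t u).card

/-- empirical p-values expressed through scores -/
noncomputable def pv {m n : ℕ} (s : Fin m → ℝ) (t : Fin n → ℝ) (j : Fin m) : ℝ :=
  (1 / (n : ℝ)) * ∑ u : Fin n, if s j ≤ t u then (1 : ℝ) else 0

lemma pv_eq {m n : ℕ} (s : Fin m → ℝ) (t : Fin n → ℝ) (j : Fin m) :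
    pv s t j = (cnt s t j : ℝ) / n := by
  rw [pv, cnt, Finset.sum_boole]; ring

section params
variable (m n ℓ : ℕ) (α : ℝ)
variable {s : Fin m → ℝ} {t : Fin n → ℝ}

/-- number of `j` with `cnt j + 1 ≤ k ℓ` -/
noncomputable def Ncnt (s : Fin m → ℝ) (t : Fin n → ℝ) (k : ℕ) : ℕ :=
  (Finset.univ.filter fun j => cnt s t j + 1 ≤ k * ℓ).card

noncomputable def Kset (s : Fin m → ℝ) (t : Fin n → ℝ) : Finset ℕ :=
  (Finset.Icc 1 m).filter fun k => k ≤ Ncnt m n ℓ s t k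

noncomputable def khat (s : Fin m → ℝ) (t : Fin n → ℝ) : ℕ :=
  if h : (Kset m n ℓ s t).Nonempty then (Kset m n ℓ s t).max' h else 0

variable (hm : 0 < m) (hn : 0 < n) (hl : 1 ≤ ℓ)
  (hα : 0 < α) (hα1 : α ≤ 1) (hcal : (n : ℝ) = (ℓ : ℝ) * m / α - 1)

include hm hl hα hcal in
lemma thresh_eq (k : ℕ) : α * k / m = (k * ℓ : ℕ) / ((n : ℝ) + 1) := by
  have h1 : (n : ℝ) + 1 = (ℓ : ℝ) * m / α := by rw [hcal]; ring
  have hmr : (0:ℝ) < m := by exact_mod_cast hm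
  have hlr : (0:ℝ) < ℓ := by exact_mod_cast hl
  rw [h1]
  push_cast
  field_simp

include hm hn hl hα hα1 hcal in
lemma ml_le : m * ℓ ≤ n + 1 := by
  have h1 : (n : ℝ) + 1 = (ℓ : ℝ) * m / α := by rw [hcal]; ring
  have : (m * ℓ : ℝ) ≤ (n : ℝ) + 1 := by
    rw [h1]
    rw [le_div_iff₀ hα]
    have hml : (0:ℝ) ≤ (ℓ:ℝ) * m := by positivity
    nlinarith
  exact_mod_cast this

include hm hn hl hα hα1 hcal in
lemma pv_le_iff {k : ℕ} (hk1 : 1 ≤ k) (hkm : k ≤ m) (j : Fin m) :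
    pv s t j ≤ α * k / m ↔ cnt s t j + 1 ≤ k * ℓ := by
  have hkl : k * ℓ ≤ n + 1 :=
    le_trans (Nat.mul_le_mul_right ℓ hkm) (ml_le m n ℓ α hm hn hl hα hα1 hcal)
  have hnr : (0:ℝ) < n := by exact_mod_cast hn
  have hn1 : (0:ℝ) < (n:ℝ) + 1 := by positivity
  rw [pv_eq, thresh_eq m n ℓ α hm hl hα hcal, div_le_div_iff₀ hnr hn1]
  set c := cnt s t j with hc
  set K := k * ℓ with hK
  have hkl1 : 1 ≤ K := Nat.one_le_iff_ne_zero.mpr (by positivity)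
  have key : c * (n+1) ≤ K * n ↔ c + 1 ≤ K := by
    constructor
    · intro h'
      by_contra hcon
      push_neg at hcon
      have hKc : K ≤ c := by omega
      have h2 : K * n ≤ c * n := Nat.mul_le_mul_right n hKc
      have h3 : c * (n+1) = c * n + c := by ring
      omega
    · intro h'
      have h3 : (c+1) * (n+1) ≤ K * (n+1) := Nat.mul_le_mul_right _ h'
      have e1 : (c+1)*(n+1) = c*(n+1) + n + 1 := by ring
      have e2 : K*(n+1) = K*n + K := by ring
      omega
  rw [← key]
  constructor
  · intro h; exact_mod_cast h
  · intro h; exact_mod_cast h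

include hm hn hl hα hα1 hcal in
lemma Ncnt_card {k : ℕ} (hk1 : 1 ≤ k) (hkm : k ≤ m) :
    (Finset.univ.filter fun j => pv s t j ≤ α * (k:ℝ) / m).card = Ncnt m n ℓ s t k := by
  unfold Ncnt
  congr 1
  apply Finset.filter_congr
  intro j _
  exact pv_le_iff m n ℓ α hm hn hl hα hα1 hcal hk1 hkm j

lemma khat_mem (h : (Kset m n ℓ s t).Nonempty) : khat m n ℓ s t ∈ Kset m n ℓ s t := by
  rw [khat, dif_pos h]; exact Finset.max'_mem _ h

lemma le_khat {k : ℕ} (hk : k ∈ Kset m n ℓ s t) : k ≤ khat m n ℓ s t := by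
  rw [khat, dif_pos ⟨k, hk⟩]; exact Finset.le_max' _ _ hk

include hm hn hl hα hα1 hcal in
lemma rej_iff (i : Fin m) :
    bhRejects m α (pv s t) i ↔ cnt s t i + 1 ≤ khat m n ℓ s t * ℓ := by
  constructor
  · rintro ⟨k, hkIcc, hpi, hcard⟩
    rw [Finset.mem_Icc] at hkIcc
    have hk : k ∈ Kset m n ℓ s t := by
      rw [Kset, Finset.mem_filter, Finset.mem_Icc]
      refine ⟨⟨hkIcc.1, hkIcc.2⟩, ?_⟩
      rwa [← Ncnt_card m n ℓ α hm hn hl hα hα1 hcal hkIcc.1 hkIcc.2]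
    have h1 := le_khat m n ℓ hk
    have h2 := (pv_le_iff m n ℓ α hm hn hl hα hα1 hcal hkIcc.1 hkIcc.2 i).mp hpi
    exact le_trans h2 (Nat.mul_le_mul_right ℓ h1)
  · intro h
    have hkh1 : 1 ≤ khat m n ℓ s t := by
      by_contra hc
      push_neg at hc
      interval_cases h' : khat m n ℓ s t <;> omega
    have hne : (Kset m n ℓ s t).Nonempty := by
      by_contra hc
      rw [Finset.not_nonempty_iff_eq_empty] at hc
      rw [khat, dif_neg (by rw [hc]; simp)] at hkh1
      omega
    have hmem := khat_mem m n ℓ hne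
    rw [Kset, Finset.mem_filter, Finset.mem_Icc] at hmem
    exact ⟨khat m n ℓ s t, Finset.mem_Icc.mpr ⟨hmem.1.1, hmem.1.2⟩,
      (pv_le_iff m n ℓ α hm hn hl hα hα1 hcal hmem.1.1 hmem.1.2 i).mpr h,
      by rw [Ncnt_card m n ℓ α hm hn hl hα hα1 hcal hmem.1.1 hmem.1.2]; exact hmem.2⟩

lemma Ncnt_mono {k k' : ℕ} (h : k ≤ k') : Ncnt m n ℓ s t k ≤ Ncnt m n ℓ s t k' := by
  apply Finset.card_le_card
  intro j hj
  rw [Finset.mem_filter] at hj ⊢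
  exact ⟨hj.1, le_trans hj.2 (Nat.mul_le_mul_right ℓ h)⟩

include hm hn hl hα hα1 hcal in
lemma bhR_eq (hne : (Kset m n ℓ s t).Nonempty) :
    bhR m α (pv s t) = khat m n ℓ s t := by
  have hmem := khat_mem m n ℓ hne
  rw [Kset, Finset.mem_filter, Finset.mem_Icc] at hmem
  have hNk : Ncnt m n ℓ s t (khat m n ℓ s t) = khat m n ℓ s t := by
    refine le_antisymm ?_ hmem.2
    set r := Ncnt m n ℓ s t (khat m n ℓ s t) with hr
    have hrm : r ≤ m := le_trans (Finset.card_filter_le _ _) (le_of_eq (by simp))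
    have hr1 : 1 ≤ r := le_trans hmem.1.1 hmem.2
    have hrK : r ∈ Kset m n ℓ s t := by
      rw [Kset, Finset.mem_filter, Finset.mem_Icc]
      refine ⟨⟨hr1, hrm⟩, ?_⟩
      conv_lhs => rw [hr]
      exact Ncnt_mono m n ℓ hmem.2
    exact le_khat m n ℓ hrK
  rw [bhR]
  have : (Finset.univ.filter fun i => bhRejects m α (pv s t) i)
      = Finset.univ.filter fun j => cnt s t j + 1 ≤ khat m n ℓ s t * ℓ := by
    apply Finset.filter_congr
    intro j _
    exact rej_iff m n ℓ α hm hn hl hα hα1 hcal j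
  rw [this]
  exact hNk

end params
end BHAux

section config

open Finset

variable {m n : ℕ}

noncomputable def rho {n : ℕ} (w : Fin (n+1) → ℝ) (v : Fin (n+1)) : ℕ :=
  (Finset.univ.filter fun v' => w v ≤ w v').card

noncomputable def rnk {m n : ℕ} (s' : Fin m → ℝ) (w : Fin (n+1) → ℝ) (j : Fin m) : ℕ :=
  (Finset.univ.filter fun v' => s' j ≤ w v').card

def dmap {n : ℕ} (v : Fin (n+1)) (u : Fin n) : Fin (n+1) :=
  if u.succ = v then 0 else u.succ

noncomputable def sconf {m n : ℕ} (i : Fin m) (s' : Fin m → ℝ) (w : Fin (n+1) → ℝ)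
    (v : Fin (n+1)) : Fin m → ℝ := Function.update s' i (w v)

noncomputable def tconf {n : ℕ} (w : Fin (n+1) → ℝ) (v : Fin (n+1)) : Fin n → ℝ :=
  fun u => w (dmap v u)

lemma dmap_inj (v : Fin (n+1)) : Function.Injective (dmap (n := n) v) := by
  intro u u' h
  unfold dmap at h
  by_cases h1 : u.succ = v <;> by_cases h2 : u'.succ = v
  · rw [← h2] at h1; exact Fin.succ_injective _ h1
  · rw [if_pos h1, if_neg h2] at h; exact absurd h.symm (Fin.succ_ne_zero u')
  · rw [if_neg h1, if_pos h2] at h; exact absurd h (Fin.succ_ne_zero u)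
  · rw [if_neg h1, if_neg h2] at h; exact Fin.succ_injective _ h

lemma dmap_image (v : Fin (n+1)) :
    Finset.univ.image (dmap (n := n) v) = Finset.univ.erase v := by
  apply Finset.eq_of_subset_of_card_le
  · intro x hx
    rw [Finset.mem_image] at hx
    obtain ⟨u, _, rfl⟩ := hx
    rw [Finset.mem_erase]
    refine ⟨?_, Finset.mem_univ _⟩
    unfold dmap
    by_cases h1 : u.succ = v
    · rw [if_pos h1]; rw [← h1]; exact (Fin.succ_ne_zero u).symm
    · rw [if_neg h1]; exact h1
  · rw [Finset.card_erase_of_mem (Finset.mem_univ v),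
      Finset.card_image_of_injective _ (dmap_inj v)]
    simp

lemma count_aux (w : Fin (n+1) → ℝ) (x : ℝ) (v : Fin (n+1)) :
    (Finset.univ.filter fun u => x ≤ w (dmap v u)).card + (if x ≤ w v then 1 else 0)
      = (Finset.univ.filter fun v' => x ≤ w v').card := by
  have h1 : (Finset.univ.filter fun u => x ≤ w (dmap v u)).card
      = ((Finset.univ.image (dmap (n := n) v)).filter fun v' => x ≤ w v').card := by
    rw [Finset.filter_image, Finset.card_image_of_injective _ (dmap_inj v)]
  rw [h1, dmap_image, Finset.filter_erase]
  by_cases h : x ≤ w v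
  · have hv : v ∈ Finset.univ.filter fun v' => x ≤ w v' :=
      Finset.mem_filter.mpr ⟨Finset.mem_univ v, h⟩
    rw [if_pos h, Finset.card_erase_of_mem hv]
    have := Finset.card_pos.mpr ⟨v, hv⟩
    omega
  · rw [if_neg h, add_zero]
    congr 1
    apply Finset.erase_eq_of_notMem
    simp [h]

lemma cnt_conf_i (i : Fin m) (s' : Fin m → ℝ) (w : Fin (n+1) → ℝ) (v : Fin (n+1)) :
    BHAux.cnt (sconf i s' w v) (tconf w v) i + 1 = rho w v := by
  have h := count_aux w (w v) v
  rw [if_pos le_rfl] at h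
  unfold BHAux.cnt sconf tconf rho
  simpa using h

lemma cnt_conf_ne (i : Fin m) (s' : Fin m → ℝ) (w : Fin (n+1) → ℝ) (v : Fin (n+1))
    {j : Fin m} (hj : j ≠ i) :
    BHAux.cnt (sconf i s' w v) (tconf w v) j + (if s' j ≤ w v then 1 else 0)
      = rnk s' w j := by
  have h := count_aux w (s' j) v
  unfold BHAux.cnt sconf tconf rnk
  simpa [Function.update_of_ne hj] using h

lemma key_iff (s' : Fin m → ℝ) (w : Fin (n+1) → ℝ) (v : Fin (n+1)) (j : Fin m) :
    s' j ≤ w v ↔ rho w v ≤ rnk s' w j := by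
  constructor
  · intro h
    apply Finset.card_le_card
    intro v' hv'
    rw [Finset.mem_filter] at hv' ⊢
    exact ⟨hv'.1, le_trans h hv'.2⟩
  · contrapose
    intro h
    push_neg at h ⊢
    have hvmem : v ∈ Finset.univ.filter fun v' => w v ≤ w v' :=
      Finset.mem_filter.mpr ⟨Finset.mem_univ v, le_rfl⟩
    have hsub : (Finset.univ.filter fun v' => s' j ≤ w v')
        ⊆ (Finset.univ.filter fun v' => w v ≤ w v').erase v := by
      intro v' hv'
      rw [Finset.mem_filter] at hv'
      rw [Finset.mem_erase, Finset.mem_filter]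
      refine ⟨?_, Finset.mem_univ _, le_of_lt (lt_of_lt_of_le h hv'.2)⟩
      rintro rfl
      exact absurd hv'.2 (not_le.mpr h)
    have h2 := Finset.card_le_card hsub
    rw [Finset.card_erase_of_mem hvmem] at h2
    have h3 := Finset.card_pos.mpr ⟨v, hvmem⟩
    unfold rho rnk
    omega

noncomputable def Mstar (m : ℕ) (ℓ : ℕ) (i : Fin m) (s' : Fin m → ℝ)
    (w : Fin (n+1) → ℝ) (k : ℕ) : ℕ :=
  (Finset.univ.filter fun j => j = i ∨ rnk s' w j ≤ k * ℓ).card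

noncomputable def Kstar (m : ℕ) (ℓ : ℕ) (i : Fin m) (s' : Fin m → ℝ)
    (w : Fin (n+1) → ℝ) : Finset ℕ :=
  (Finset.Icc 1 m).filter fun k => k ≤ Mstar m ℓ i s' w k

noncomputable def kstar (m : ℕ) (ℓ : ℕ) (i : Fin m) (s' : Fin m → ℝ)
    (w : Fin (n+1) → ℝ) : ℕ :=
  if h : (Kstar m ℓ i s' w).Nonempty then (Kstar m ℓ i s' w).max' h else 0

lemma Kstar_ne (ℓ : ℕ) (i : Fin m) (s' : Fin m → ℝ) (w : Fin (n+1) → ℝ) (hm : 0 < m) :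
    (Kstar m ℓ i s' w).Nonempty := by
  refine ⟨1, Finset.mem_filter.mpr ⟨Finset.mem_Icc.mpr ⟨le_rfl, hm⟩, ?_⟩⟩
  exact Finset.card_pos.mpr ⟨i, Finset.mem_filter.mpr ⟨Finset.mem_univ i, Or.inl rfl⟩⟩

lemma kstar_mem (ℓ : ℕ) (i : Fin m) (s' : Fin m → ℝ) (w : Fin (n+1) → ℝ) (hm : 0 < m) :
    kstar m ℓ i s' w ∈ Kstar m ℓ i s' w := by
  rw [kstar, dif_pos (Kstar_ne ℓ i s' w hm)]
  exact Finset.max'_mem _ _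

lemma N_le_Mstar (ℓ : ℕ) (i : Fin m) (s' : Fin m → ℝ) (w : Fin (n+1) → ℝ)
    (v : Fin (n+1)) (k : ℕ) :
    BHAux.Ncnt m n ℓ (sconf i s' w v) (tconf w v) k ≤ Mstar m ℓ i s' w k := by
  apply Finset.card_le_card
  intro j hj
  rw [Finset.mem_filter] at hj ⊢
  refine ⟨hj.1, ?_⟩
  by_cases hji : j = i
  · exact Or.inl hji
  · right
    have h := cnt_conf_ne i s' w v hji
    have h2 := hj.2
    by_cases hle : s' j ≤ w v
    · rw [if_pos hle] at h; omega
    · rw [if_neg hle] at h; omega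

lemma Mstar_le_N (ℓ : ℕ) (i : Fin m) (s' : Fin m → ℝ) (w : Fin (n+1) → ℝ)
    (v : Fin (n+1)) (k : ℕ) (hρ : rho w v ≤ k * ℓ) :
    Mstar m ℓ i s' w k ≤ BHAux.Ncnt m n ℓ (sconf i s' w v) (tconf w v) k := by
  apply Finset.card_le_card
  intro j hj
  rw [Finset.mem_filter] at hj ⊢
  refine ⟨hj.1, ?_⟩
  rcases hj.2 with hji | hrj
  · subst hji
    have := cnt_conf_i j s' w v
    omega
  · by_cases hji : j = i
    · subst hji
      have := cnt_conf_i j s' w v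
      omega
    · have h := cnt_conf_ne i s' w v hji
      by_cases hle : s' j ≤ w v
      · rw [if_pos hle] at h; omega
      · rw [if_neg hle] at h
        have hk := (not_congr (key_iff s' w v j)).mp hle
        push_neg at hk
        omega

end config

section part3
open Finset
variable {m n : ℕ}

lemma Kconf_sub (ℓ : ℕ) (i : Fin m) (s' : Fin m → ℝ) (w : Fin (n+1) → ℝ) (v : Fin (n+1)) :
    BHAux.Kset m n ℓ (sconf i s' w v) (tconf w v) ⊆ Kstar m ℓ i s' w := by
  intro k hk
  rw [BHAux.Kset, Finset.mem_filter] at hk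
  rw [Kstar, Finset.mem_filter]
  exact ⟨hk.1, le_trans hk.2 (N_le_Mstar ℓ i s' w v k)⟩

lemma khat_le_kstar (ℓ : ℕ) (i : Fin m) (s' : Fin m → ℝ) (w : Fin (n+1) → ℝ)
    (v : Fin (n+1)) (hm : 0 < m) :
    BHAux.khat m n ℓ (sconf i s' w v) (tconf w v) ≤ kstar m ℓ i s' w := by
  by_cases h : (BHAux.Kset m n ℓ (sconf i s' w v) (tconf w v)).Nonempty
  · have h1 := BHAux.khat_mem m n ℓ h
    have h2 := Kconf_sub ℓ i s' w v h1
    rw [kstar, dif_pos (Kstar_ne ℓ i s' w hm)]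
    exact Finset.le_max' _ _ h2
  · rw [BHAux.khat, dif_neg h]; exact Nat.zero_le _

lemma khat_eq_kstar (ℓ : ℕ) (i : Fin m) (s' : Fin m → ℝ) (w : Fin (n+1) → ℝ)
    (v : Fin (n+1)) (hm : 0 < m) (hρ : rho w v ≤ kstar m ℓ i s' w * ℓ) :
    BHAux.khat m n ℓ (sconf i s' w v) (tconf w v) = kstar m ℓ i s' w ∧
    (BHAux.Kset m n ℓ (sconf i s' w v) (tconf w v)).Nonempty := by
  have hks := kstar_mem ℓ i s' w hm
  rw [Kstar, Finset.mem_filter] at hks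
  have hmemK : kstar m ℓ i s' w ∈ BHAux.Kset m n ℓ (sconf i s' w v) (tconf w v) := by
    rw [BHAux.Kset, Finset.mem_filter]
    exact ⟨hks.1, le_trans hks.2 (Mstar_le_N ℓ i s' w v _ hρ)⟩
  exact ⟨le_antisymm (khat_le_kstar ℓ i s' w v hm) (BHAux.le_khat m n ℓ hmemK),
    ⟨_, hmemK⟩⟩

lemma contrib_eq (ℓ : ℕ) (α : ℝ) (i : Fin m) (s' : Fin m → ℝ) (w : Fin (n+1) → ℝ)
    (v : Fin (n+1)) (hm : 0 < m) (hn : 0 < n) (hl : 1 ≤ ℓ) (hα : 0 < α) (hα1 : α ≤ 1)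
    (hcal : (n : ℝ) = (ℓ : ℝ) * m / α - 1) :
    (if bhRejects m α (BHAux.pv (sconf i s' w v) (tconf w v)) i
      then ((bhR m α (BHAux.pv (sconf i s' w v) (tconf w v)) : ℝ))⁻¹ else 0)
    = if rho w v ≤ kstar m ℓ i s' w * ℓ then ((kstar m ℓ i s' w : ℝ))⁻¹ else 0 := by
  by_cases hρ : rho w v ≤ kstar m ℓ i s' w * ℓ
  · obtain ⟨hk, hne⟩ := khat_eq_kstar ℓ i s' w v hm hρ
    have hci := cnt_conf_i i s' w v
    have hrej : bhRejects m α (BHAux.pv (sconf i s' w v) (tconf w v)) i :=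
      (BHAux.rej_iff m n ℓ α hm hn hl hα hα1 hcal i).mpr (by rw [hk]; omega)
    rw [if_pos hrej, if_pos hρ, BHAux.bhR_eq m n ℓ α hm hn hl hα hα1 hcal hne, hk]
  · have hnrej : ¬ bhRejects m α (BHAux.pv (sconf i s' w v) (tconf w v)) i := by
      intro hrej
      have h2 := (BHAux.rej_iff m n ℓ α hm hn hl hα hα1 hcal i).mp hrej
      have h3 := cnt_conf_i i s' w v
      have h4 := Nat.mul_le_mul_right ℓ (khat_le_kstar ℓ i s' w v hm)
      omega
    rw [if_neg hnrej, if_neg hρ]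

lemma rho_pos (w : Fin (n+1) → ℝ) (v : Fin (n+1)) : 1 ≤ rho w v :=
  Finset.card_pos.mpr ⟨v, Finset.mem_filter.mpr ⟨Finset.mem_univ v, le_rfl⟩⟩

lemma rho_le (w : Fin (n+1) → ℝ) (v : Fin (n+1)) : rho w v ≤ n + 1 :=
  le_trans (Finset.card_filter_le _ _) (le_of_eq (by simp))

lemma rho_lt (w : Fin (n+1) → ℝ) {v v' : Fin (n+1)} (hlt : w v < w v') :
    rho w v' < rho w v := by
  have hvmem : v ∈ Finset.univ.filter fun v'' => w v ≤ w v'' :=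
    Finset.mem_filter.mpr ⟨Finset.mem_univ v, le_rfl⟩
  have hsub : (Finset.univ.filter fun v'' => w v' ≤ w v'')
      ⊆ (Finset.univ.filter fun v'' => w v ≤ w v'').erase v := by
    intro v'' hv''
    rw [Finset.mem_filter] at hv''
    rw [Finset.mem_erase, Finset.mem_filter]
    refine ⟨?_, Finset.mem_univ _, le_of_lt (lt_of_lt_of_le hlt hv''.2)⟩
    rintro rfl
    exact absurd hv''.2 (not_le.mpr hlt)
  have h2 := Finset.card_le_card hsub
  rw [Finset.card_erase_of_mem hvmem] at h2
  have h3 := Finset.card_pos.mpr ⟨v, hvmem⟩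
  unfold rho
  omega

lemma rho_inj (w : Fin (n+1) → ℝ) (hw : Function.Injective w) :
    Function.Injective (rho w) := by
  intro v v' h
  by_contra hne
  have hww : w v ≠ w v' := fun hc => hne (hw hc)
  rcases lt_or_gt_of_ne hww with hlt | hlt
  · exact absurd h.symm (Nat.ne_of_lt (rho_lt w hlt))
  · exact absurd h (Nat.ne_of_lt (rho_lt w hlt))

lemma card_rho (w : Fin (n+1) → ℝ) (hw : Function.Injective w) (K : ℕ) (hK : K ≤ n+1) :
    (Finset.univ.filter fun v => rho w v ≤ K).card = K := by
  have himg : Finset.univ.image (rho w) = Finset.Icc 1 (n+1) := by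
    apply Finset.eq_of_subset_of_card_le
    · intro x hx
      rw [Finset.mem_image] at hx
      obtain ⟨v, _, rfl⟩ := hx
      exact Finset.mem_Icc.mpr ⟨rho_pos w v, rho_le w v⟩
    · rw [Nat.card_Icc, Finset.card_image_of_injective _ (rho_inj w hw)]
      simp
  calc (Finset.univ.filter fun v => rho w v ≤ K).card
      = ((Finset.univ.image (rho w)).filter fun x => x ≤ K).card := by
        rw [Finset.filter_image, Finset.card_image_of_injective _ (rho_inj w hw)]
    _ = ((Finset.Icc 1 (n+1)).filter fun x => x ≤ K).card := by rw [himg]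
    _ = (Finset.Icc 1 K).card := by
        congr 1
        ext x
        simp only [Finset.mem_filter, Finset.mem_Icc]
        omega
    _ = K := by rw [Nat.card_Icc]; omega

lemma sum_contrib (ℓ : ℕ) (α : ℝ) (i : Fin m) (s' : Fin m → ℝ) (w : Fin (n+1) → ℝ)
    (hm : 0 < m) (hn : 0 < n) (hl : 1 ≤ ℓ) (hα : 0 < α) (hα1 : α ≤ 1)
    (hcal : (n : ℝ) = (ℓ : ℝ) * m / α - 1) (hw : Function.Injective w) :
    ∑ v : Fin (n+1), (if bhRejects m α (BHAux.pv (sconf i s' w v) (tconf w v)) i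
      then ((bhR m α (BHAux.pv (sconf i s' w v) (tconf w v)) : ℝ))⁻¹ else 0) = (ℓ : ℝ) := by
  rw [Finset.sum_congr rfl (fun v _ => contrib_eq ℓ α i s' w v hm hn hl hα hα1 hcal)]
  rw [Finset.sum_ite, Finset.sum_const, Finset.sum_const_zero, add_zero]
  have hks := kstar_mem ℓ i s' w hm
  rw [Kstar, Finset.mem_filter, Finset.mem_Icc] at hks
  have hkl : kstar m ℓ i s' w * ℓ ≤ n + 1 :=
    le_trans (Nat.mul_le_mul_right ℓ hks.1.2) (BHAux.ml_le m n ℓ α hm hn hl hα hα1 hcal)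
  rw [card_rho w hw _ hkl]
  have hk0 : ((kstar m ℓ i s' w : ℝ)) ≠ 0 := by
    have := hks.1.1
    positivity
  rw [nsmul_eq_mul]
  push_cast
  field_simp

end part3

section part4
open Finset

lemma bhFDP_eq_sum (m : ℕ) (α : ℝ) (H0 : Finset (Fin m)) (p : Fin m → ℝ) :
    bhFDP m α H0 p
      = ∑ i ∈ H0, (if bhRejects m α p i then ((bhR m α p : ℝ))⁻¹ else 0) := by
  rw [bhFDP, bhFP, div_eq_mul_inv, Finset.natCast_card_filter, Finset.sum_mul]
  apply Finset.sum_congr rfl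
  intro i _
  split <;> simp

noncomputable def bhTerm (m n : ℕ) (α : ℝ) (i : Fin m) (y : Fin m ⊕ Fin n → ℝ) : ℝ :=
  if bhRejects m α (BHAux.pv (y ∘ Sum.inl) (y ∘ Sum.inr)) i
    then ((bhR m α (BHAux.pv (y ∘ Sum.inl) (y ∘ Sum.inr)) : ℝ))⁻¹ else 0

lemma rej_bhR_pos {m : ℕ} {α : ℝ} {p : Fin m → ℝ} {i : Fin m}
    (h : bhRejects m α p i) : 1 ≤ bhR m α p :=
  Finset.card_pos.mpr ⟨i, Finset.mem_filter.mpr ⟨Finset.mem_univ i, h⟩⟩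

lemma bhTerm_bound (m n : ℕ) (α : ℝ) (i : Fin m) (y : Fin m ⊕ Fin n → ℝ) :
    ‖bhTerm m n α i y‖ ≤ 1 := by
  rw [bhTerm]
  split
  · next h =>
    have h1 := rej_bhR_pos h
    rw [Real.norm_eq_abs, abs_of_nonneg (by positivity), ← one_div]
    apply div_le_one_of_le₀
    · exact_mod_cast h1
    · positivity
  · simp

lemma meas_pv (m n : ℕ) (j : Fin m) :
    Measurable fun y : Fin m ⊕ Fin n → ℝ => BHAux.pv (y ∘ Sum.inl) (y ∘ Sum.inr) j := by
  unfold BHAux.pv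
  simp only [Function.comp_apply]
  apply Measurable.const_mul
  apply Finset.measurable_sum
  intro u _
  exact Measurable.ite
    (measurableSet_le (measurable_pi_apply (Sum.inl j)) (measurable_pi_apply (Sum.inr u)))
    measurable_const measurable_const

lemma meas_card (m n : ℕ) (c : Fin m → ℝ) :
    Measurable fun y : Fin m ⊕ Fin n → ℝ =>
      (Finset.univ.filter fun j => BHAux.pv (y ∘ Sum.inl) (y ∘ Sum.inr) j ≤ c j).card := by
  have : (fun y : Fin m ⊕ Fin n → ℝ =>
      (Finset.univ.filter fun j => BHAux.pv (y ∘ Sum.inl) (y ∘ Sum.inr) j ≤ c j).card)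
      = fun y => ∑ j : Fin m,
        if BHAux.pv (y ∘ Sum.inl) (y ∘ Sum.inr) j ≤ c j then 1 else 0 := by
    funext y
    rw [Finset.sum_boole]
    simp
  rw [this]
  apply Finset.measurable_sum
  intro j _
  exact Measurable.ite (measurableSet_le (meas_pv m n j) measurable_const)
    measurable_const measurable_const

lemma ms_rej (m n : ℕ) (α : ℝ) (i : Fin m) :
    MeasurableSet {y : Fin m ⊕ Fin n → ℝ |
      bhRejects m α (BHAux.pv (y ∘ Sum.inl) (y ∘ Sum.inr)) i} := by
  have hset : {y : Fin m ⊕ Fin n → ℝ |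
      bhRejects m α (BHAux.pv (y ∘ Sum.inl) (y ∘ Sum.inr)) i}
      = ⋃ k ∈ Finset.Icc 1 m,
        ({y : Fin m ⊕ Fin n → ℝ | BHAux.pv (y ∘ Sum.inl) (y ∘ Sum.inr) i ≤ α * k / m}
          ∩ {y : Fin m ⊕ Fin n → ℝ | k ≤ (Finset.univ.filter fun j =>
              BHAux.pv (y ∘ Sum.inl) (y ∘ Sum.inr) j ≤ α * (k:ℝ) / m).card}) := by
    ext y
    simp only [Set.mem_setOf_eq, Set.mem_iUnion, Set.mem_inter_iff, bhRejects]
    tauto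
  rw [hset]
  apply MeasurableSet.biUnion (Finset.Icc 1 m).countable_toSet
  intro k _
  exact (measurableSet_le (meas_pv m n i) measurable_const).inter
    ((meas_card m n (fun _ => α * (k:ℝ) / m)) (by trivial))

lemma meas_bhR (m n : ℕ) (α : ℝ) :
    Measurable fun y : Fin m ⊕ Fin n → ℝ =>
      bhR m α (BHAux.pv (y ∘ Sum.inl) (y ∘ Sum.inr)) := by
  have : (fun y : Fin m ⊕ Fin n → ℝ => bhR m α (BHAux.pv (y ∘ Sum.inl) (y ∘ Sum.inr)))
      = fun y => ∑ i : Fin m,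
        if bhRejects m α (BHAux.pv (y ∘ Sum.inl) (y ∘ Sum.inr)) i then 1 else 0 := by
    funext y
    rw [bhR, Finset.sum_boole]
    simp
  rw [this]
  apply Finset.measurable_sum
  intro i _
  exact Measurable.ite (ms_rej m n α i) measurable_const measurable_const

lemma meas_bhTerm (m n : ℕ) (α : ℝ) (i : Fin m) :
    Measurable (bhTerm m n α i) := by
  unfold bhTerm
  apply Measurable.ite (ms_rej m n α i) _ measurable_const
  exact (measurable_from_top (f := fun k : ℕ => ((k : ℝ))⁻¹)).comp (meas_bhR m n α)

/-- the coordinate associated with slot `v` of the augmented calibration set -/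
def iota {m n : ℕ} (i : Fin m) (v : Fin (n+1)) : Fin m ⊕ Fin n :=
  if h : v = 0 then Sum.inl i else Sum.inr (v.pred h)

lemma iota_zero {m n : ℕ} (i : Fin m) : iota (n := n) i 0 = Sum.inl i := by
  rw [iota, dif_pos rfl]

lemma iota_succ {m n : ℕ} (i : Fin m) (u : Fin n) : iota i u.succ = Sum.inr u := by
  rw [iota, dif_neg (Fin.succ_ne_zero u)]
  simp

lemma iota_inj {m n : ℕ} (i : Fin m) : Function.Injective (iota (n := n) i) := by
  intro v v' h
  rw [iota, iota] at h
  by_cases h1 : v = 0 <;> by_cases h2 : v' = 0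
  · rw [h1, h2]
  · rw [dif_pos h1, dif_neg h2] at h; exact absurd h (by simp)
  · rw [dif_neg h1, dif_pos h2] at h; exact absurd h (by simp)
  · rw [dif_neg h1, dif_neg h2, Sum.inr.injEq] at h
    have := congrArg Fin.succ h
    rwa [Fin.succ_pred, Fin.succ_pred] at this

lemma comp_inl {m n : ℕ} (i : Fin m) (y : Fin m ⊕ Fin n → ℝ) (v : Fin (n+1)) :
    (y ∘ (Equiv.swap (Sum.inl i) (iota i v))) ∘ Sum.inl
      = sconf i (y ∘ Sum.inl) (fun v' => y (iota i v')) v := by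
  funext j
  by_cases hj : j = i
  · subst hj
    simp only [Function.comp_apply, Equiv.swap_apply_left, sconf, Function.update_self]
  · have h1 : (Sum.inl j : Fin m ⊕ Fin n) ≠ Sum.inl i := by simp [hj]
    have h2 : (Sum.inl j : Fin m ⊕ Fin n) ≠ iota i v := by
      rw [iota]
      split
      · simp [hj]
      · simp
    simp only [Function.comp_apply, Equiv.swap_apply_of_ne_of_ne h1 h2, sconf,
      Function.update_of_ne hj]

lemma comp_inr {m n : ℕ} (i : Fin m) (y : Fin m ⊕ Fin n → ℝ) (v : Fin (n+1)) :
    (y ∘ (Equiv.swap (Sum.inl i) (iota i v))) ∘ Sum.inr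
      = tconf (fun v' => y (iota i v')) v := by
  funext u
  by_cases hv : u.succ = v
  · have hiv : iota (n := n) i v = Sum.inr u := by rw [← hv, iota_succ]
    simp only [Function.comp_apply, tconf, dmap, if_pos hv]
    rw [← hiv, Equiv.swap_apply_right, iota_zero]
  · have h1 : Sum.inr u ≠ Sum.inl i := by simp
    have h2 : (Sum.inr u : Fin m ⊕ Fin n) ≠ iota i v := by
      rw [iota]
      split
      · simp
      · next h =>
        simp only [ne_eq, Sum.inr.injEq]
        intro hc
        apply hv
        rw [hc, Fin.succ_pred]
    simp only [Function.comp_apply, Equiv.swap_apply_of_ne_of_ne h1 h2, tconf, dmap,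
      if_neg hv]
    rw [← iota_succ i u]

end part4

section part5
open MeasureTheory ProbabilityTheory Finset

lemma map_eq_pi {Ω : Type*} [MeasurableSpace Ω] {ι : Type*} [Fintype ι]
    (μ : Measure Ω) [IsProbabilityMeasure μ]
    (f : ι → Ω → ℝ) (hf : ∀ c, Measurable (f c))
    (hind : iIndepFun f μ) :
    μ.map (fun ω c => f c ω) = Measure.pi (fun c => μ.map (f c)) := by
  haveI : ∀ c, IsProbabilityMeasure (μ.map (f c)) :=
    fun c => Measure.isProbabilityMeasure_map (hf c).aemeasurable
  refine (Measure.pi_eq ?_).symm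
  intro s hs
  rw [Measure.map_apply (measurable_pi_lambda _ hf) (MeasurableSet.univ_pi hs)]
  have hpre : (fun ω c => f c ω) ⁻¹' (Set.univ.pi s) = ⋂ c ∈ Finset.univ, f c ⁻¹' s c := by
    ext ω
    simp [Set.mem_univ_pi]
  rw [hpre, hind.measure_inter_preimage_eq_mul Finset.univ (fun c _ => hs c)]
  exact Finset.prod_congr rfl (fun c _ => (Measure.map_apply (hf c) (hs c)).symm)

lemma measure_eq_coord_zero {Ω : Type*} [MeasurableSpace Ω] {ι : Type*}
    (μ : Measure Ω) [IsProbabilityMeasure μ]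
    (f : ι → Ω → ℝ) (hf : ∀ c, Measurable (f c))
    (hind : iIndepFun f μ) {c c' : ι} (hcc : c ≠ c')
    (hatom : ∀ x : ℝ, μ.map (f c') {x} = 0) :
    μ {ω | f c ω = f c' ω} = 0 := by
  haveI : IsProbabilityMeasure (μ.map (f c')) :=
    Measure.isProbabilityMeasure_map (hf c').aemeasurable
  have hpair : IndepFun (f c) (f c') μ := hind.indepFun hcc
  have hmap : μ.map (fun ω => (f c ω, f c' ω)) = (μ.map (f c)).prod (μ.map (f c')) :=
    (indepFun_iff_map_prod_eq_prod_map_map (hf c).aemeasurable (hf c').aemeasurable).mp hpair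
  have hmeas : MeasurableSet {p : ℝ × ℝ | p.1 = p.2} :=
    measurableSet_eq_fun measurable_fst measurable_snd
  have hre : {ω | f c ω = f c' ω} = (fun ω => (f c ω, f c' ω)) ⁻¹' {p | p.1 = p.2} := rfl
  rw [hre, ← Measure.map_apply ((hf c).prodMk (hf c')) hmeas, hmap,
    Measure.prod_apply hmeas]
  have hfib : ∀ x : ℝ, (Prod.mk x ⁻¹' {p : ℝ × ℝ | p.1 = p.2}) = {x} := by
    intro x
    ext z
    simp [eq_comm]
  simp_rw [hfib]
  simp [hatom]


/-- with a single shared calibration set `Z 0, …, Z (n-1)` of i.i.d. `P0`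
points, independent of the independent test points `X i` (the null ones having law `P0`),
and `n = ℓ m / α - 1` with `ℓ m / α` an integer, BH at level `α` applied to the empirical
p-values achieves exact FDR control `FDR = m0 * α / m`. -/
theorem bh_shared_calibration_exact_fdr_control
    {Ω 𝒳 : Type*} [MeasurableSpace Ω] [MeasurableSpace 𝒳]
    (μ : Measure Ω) [IsProbabilityMeasure μ]
    (P0 : Measure 𝒳) [IsProbabilityMeasure P0]
    (m n m0 : ℕ) (hm : 0 < m) (hn : 0 < n)
    (H0 : Finset (Fin m)) (hcard : H0.card = m0)
    (a : 𝒳 → ℝ) (ha : Measurable a)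
    (X : Fin m → Ω → 𝒳) (Z : Fin n → Ω → 𝒳)
    (hXmeas : ∀ i, Measurable (X i)) (hZmeas : ∀ j, Measurable (Z j))
    (hindep : iIndepFun
      (Sum.elim X Z : Fin m ⊕ Fin n → Ω → 𝒳) μ)
    (hXlaw : ∀ i ∈ H0, μ.map (X i) = P0)
    (hZlaw : ∀ j, μ.map (Z j) = P0)
    (hatomless : ∀ r : ℝ, P0 {x | a x = r} = 0)
    (α : ℝ) (hα : α ∈ Set.Ioc (0 : ℝ) 1)
    (hcal : ∃ ℓ : ℕ, 1 ≤ ℓ ∧ (n : ℝ) = (ℓ : ℝ) * m / α - 1) :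
    ∫ ω, bhFDP m α H0 (fun j => empPval n a (X j ω) (fun u => Z u ω)) ∂μ
      = m0 * α / m := by
  obtain ⟨ℓ, hl, hcal⟩ := hcal
  obtain ⟨hα0, hα1⟩ := hα
  -- score variables
  set F : (Fin m ⊕ Fin n) → Ω → ℝ := fun c ω => a (Sum.elim X Z c ω) with hF
  have hFmeas : ∀ c, Measurable (F c) := by
    rintro (j | u)
    · exact ha.comp (hXmeas j)
    · exact ha.comp (hZmeas u)
  have hFind : iIndepFun F μ :=
    hindep.comp (fun _ => a) (fun _ => ha)
  have hFlawX : ∀ i ∈ H0, μ.map (F (Sum.inl i)) = P0.map a := by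
    intro i hi
    have : F (Sum.inl i) = a ∘ (X i) := rfl
    rw [this, ← Measure.map_map ha (hXmeas i), hXlaw i hi]
  have hFlawZ : ∀ u, μ.map (F (Sum.inr u)) = P0.map a := by
    intro u
    have : F (Sum.inr u) = a ∘ (Z u) := rfl
    rw [this, ← Measure.map_map ha (hZmeas u), hZlaw u]
  have hnuatom : ∀ x : ℝ, (P0.map a) {x} = 0 := by
    intro x
    rw [Measure.map_apply ha (measurableSet_singleton x)]
    exact hatomless x
  set π : Measure (Fin m ⊕ Fin n → ℝ) := Measure.pi (fun c => μ.map (F c)) with hπ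
  haveI : ∀ c, IsProbabilityMeasure (μ.map (F c)) :=
    fun c => Measure.isProbabilityMeasure_map (hFmeas c).aemeasurable
  haveI : IsProbabilityMeasure π := by rw [hπ]; infer_instance
  have hlaw : μ.map (fun ω c => F c ω) = π := map_eq_pi μ F hFmeas hFind
  -- rewrite the integrand
  have hint : (fun ω => bhFDP m α H0 (fun j => empPval n a (X j ω) (fun u => Z u ω)))
      = fun ω => ∑ i ∈ H0, bhTerm m n α i (fun c => F c ω) := by
    funext ω
    have hpv : (fun j => empPval n a (X j ω) (fun u => Z u ω))
        = BHAux.pv ((fun c => F c ω) ∘ Sum.inl) ((fun c => F c ω) ∘ Sum.inr) := rfl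
    rw [hpv, bhFDP_eq_sum]
    rfl
  rw [hint]
  -- transfer to the product space
  have hvec : Measurable (fun ω c => F c ω) := measurable_pi_lambda _ hFmeas
  have hintg : ∀ i : Fin m, Integrable (bhTerm m n α i) π :=
    fun i => (integrable_const (1 : ℝ)).mono'
      (meas_bhTerm m n α i).aestronglyMeasurable
      (Filter.Eventually.of_forall (bhTerm_bound m n α i))
  have hstep1 : ∫ ω, (∑ i ∈ H0, bhTerm m n α i (fun c => F c ω)) ∂μ
      = ∫ y, (∑ i ∈ H0, bhTerm m n α i y) ∂π := by
    rw [← hlaw, integral_map hvec.aemeasurable]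
    exact (Finset.measurable_sum H0 fun i _ => meas_bhTerm m n α i).aestronglyMeasurable
  rw [hstep1, integral_finset_sum H0 (fun i _ => hintg i)]
  -- per-null-coordinate integral
  have hkey : ∀ i ∈ H0, ∫ y, bhTerm m n α i y ∂π = α / m := by
    intro i hi
    -- the swap maps
    set σ : Fin (n+1) → Equiv.Perm (Fin m ⊕ Fin n) :=
      fun v => Equiv.swap (Sum.inl i) (iota i v) with hσ
    have hmargiota : ∀ v, μ.map (F (iota (n := n) i v)) = μ.map (F (Sum.inl i)) := by
      intro v
      rw [iota]
      split
      · rfl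
      · rw [hFlawZ, hFlawX i hi]
    have hswap : ∀ v, (fun c => μ.map (F (σ v c))) = fun c => μ.map (F c) := by
      intro v
      funext c
      by_cases hc1 : c = Sum.inl i
      · rw [hc1, hσ]
        simp only [Equiv.swap_apply_left]
        rw [hmargiota]
      · by_cases hc2 : c = iota i v
        · rw [hc2, hσ]
          simp only [Equiv.swap_apply_right]
          exact (hmargiota v).symm
        · rw [hσ]
          simp only [Equiv.swap_apply_of_ne_of_ne hc1 hc2]
    have hmp : ∀ v, MeasurePreserving
        (MeasurableEquiv.piCongrLeft (fun _ : Fin m ⊕ Fin n => ℝ) (σ v)) π π := by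
      intro v
      have h := measurePreserving_piCongrLeft (μ := fun c => μ.map (F c)) (σ v)
      rw [hπ]
      have hre : (fun i' => μ.map (F ((σ v) i'))) = fun c => μ.map (F c) := hswap v
      rwa [hre] at h
    have hEv : ∀ v (y : Fin m ⊕ Fin n → ℝ),
        (MeasurableEquiv.piCongrLeft (fun _ : Fin m ⊕ Fin n => ℝ) (σ v)) y
          = fun c => y (σ v c) := by
      intro v y
      funext c
      have h2 := MeasurableEquiv.piCongrLeft_apply_apply (σ v)
        (β := fun _ : Fin m ⊕ Fin n => ℝ) y (σ v c)
      have h3 : σ v (σ v c) = c := Equiv.swap_apply_self _ _ _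
      rw [h3] at h2
      exact h2
    have hcomp : ∀ v, ∫ y, bhTerm m n α i (fun c => y (σ v c)) ∂π
        = ∫ y, bhTerm m n α i y ∂π := by
      intro v
      have hic := (hmp v).integral_comp
        (MeasurableEquiv.piCongrLeft (fun _ : Fin m ⊕ Fin n => ℝ) (σ v)).measurableEmbedding
        (bhTerm m n α i)
      have heq : (fun y => bhTerm m n α i
          ((MeasurableEquiv.piCongrLeft (fun _ : Fin m ⊕ Fin n => ℝ) (σ v)) y))
          = fun y => bhTerm m n α i (fun c => y (σ v c)) := by
        funext y
        rw [hEv v y]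
      rw [← hic]
      rw [show (fun x => bhTerm m n α i
          ((MeasurableEquiv.piCongrLeft (fun _ : Fin m ⊕ Fin n => ℝ) (σ v)) x))
          = fun y => bhTerm m n α i (fun c => y (σ v c)) from heq]
    -- sum over swap positions
    have hintg2 : ∀ v : Fin (n+1),
        Integrable (fun y => bhTerm m n α i (fun c => y (σ v c))) π := by
      intro v
      refine (integrable_const (1 : ℝ)).mono' ?_
        (Filter.Eventually.of_forall (fun y => bhTerm_bound m n α i _))
      exact ((meas_bhTerm m n α i).comp
        (measurable_pi_lambda _ (fun c => measurable_pi_apply (σ v c)))).aestronglyMeasurable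
    have hsum1 : ((n : ℝ) + 1) * ∫ y, bhTerm m n α i y ∂π
        = ∫ y, (∑ v : Fin (n+1), bhTerm m n α i (fun c => y (σ v c))) ∂π := by
      rw [integral_finset_sum Finset.univ (fun v _ => hintg2 v)]
      rw [Finset.sum_congr rfl (fun v _ => hcomp v), Finset.sum_const]
      simp [nsmul_eq_mul]
    -- a.e. the augmented scores are distinct
    have hae : ∀ᵐ y ∂π, Function.Injective (fun v : Fin (n+1) => y (iota i v)) := by
      rw [ae_iff]
      have hsub : {y : Fin m ⊕ Fin n → ℝ |
          ¬ Function.Injective (fun v : Fin (n+1) => y (iota i v))}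
          ⊆ ⋃ (v : Fin (n+1)) (v' : Fin (n+1)) (_ : v ≠ v'),
            {y : Fin m ⊕ Fin n → ℝ | y (iota i v) = y (iota i v')} := by
        intro y hy
        simp only [Set.mem_setOf_eq, Function.Injective, not_forall] at hy
        obtain ⟨v, v', hvv', hne⟩ := hy
        exact Set.mem_iUnion.mpr ⟨v, Set.mem_iUnion.mpr ⟨v', Set.mem_iUnion.mpr ⟨hne, hvv'⟩⟩⟩
      refine measure_mono_null hsub ?_
      refine measure_iUnion_null fun v => measure_iUnion_null fun v' =>
        measure_iUnion_null fun hne => ?_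
      have hcc : iota (n := n) i v ≠ iota i v' := fun hc => hne (iota_inj i hc)
      have hmeasset : MeasurableSet {y : Fin m ⊕ Fin n → ℝ |
          y (iota i v) = y (iota i v')} :=
        measurableSet_eq_fun (measurable_pi_apply _) (measurable_pi_apply _)
      rw [← hlaw, Measure.map_apply hvec hmeasset]
      have hpre : (fun ω c => F c ω) ⁻¹' {y : Fin m ⊕ Fin n → ℝ |
          y (iota i v) = y (iota i v')}
          = {ω | F (iota i v) ω = F (iota i v') ω} := rfl
      rw [hpre]
      apply measure_eq_coord_zero μ F hFmeas hFind hcc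
      intro x
      rw [hmargiota v', hFlawX i hi]
      exact hnuatom x
    -- pointwise identity on the injective set
    have hpoint : ∀ y : Fin m ⊕ Fin n → ℝ,
        Function.Injective (fun v : Fin (n+1) => y (iota i v)) →
        (∑ v : Fin (n+1), bhTerm m n α i (fun c => y (σ v c))) = (ℓ : ℝ) := by
      intro y hw
      have hterm : ∀ v : Fin (n+1), bhTerm m n α i (fun c => y (σ v c))
          = (if bhRejects m α (BHAux.pv
                (sconf i (y ∘ Sum.inl) (fun v' => y (iota i v')) v)
                (tconf (fun v' => y (iota i v')) v)) i
             then ((bhR m α (BHAux.pv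
                (sconf i (y ∘ Sum.inl) (fun v' => y (iota i v')) v)
                (tconf (fun v' => y (iota i v')) v)) : ℝ))⁻¹ else 0) := by
        intro v
        have h1 : ((fun c => y (σ v c)) ∘ Sum.inl)
            = sconf i (y ∘ Sum.inl) (fun v' => y (iota i v')) v := comp_inl i y v
        have h2 : ((fun c => y (σ v c)) ∘ Sum.inr)
            = tconf (fun v' => y (iota i v')) v := comp_inr i y v
        rw [bhTerm, h1, h2]
      rw [Finset.sum_congr rfl (fun v _ => hterm v)]
      exact sum_contrib ℓ α i (y ∘ Sum.inl) (fun v' => y (iota i v'))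
        hm hn hl hα0 hα1 hcal hw
    have h2 : ∫ y, (∑ v : Fin (n+1), bhTerm m n α i (fun c => y (σ v c))) ∂π
        = (ℓ : ℝ) := by
      rw [integral_congr_ae (hae.mono fun y hy => hpoint y hy)]
      simp
    rw [h2] at hsum1
    -- solve for the integral
    have hn1 : (n : ℝ) + 1 = (ℓ : ℝ) * m / α := by rw [hcal]; ring
    have hmne : (m : ℝ) ≠ 0 := by positivity
    have hlne : (ℓ : ℝ) ≠ 0 := by
      have : (1:ℝ) ≤ (ℓ:ℝ) := by exact_mod_cast hl
      linarith
    have hn1ne : (n : ℝ) + 1 ≠ 0 := by positivity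
    have : ∫ y, bhTerm m n α i y ∂π = (ℓ : ℝ) / ((n:ℝ)+1) := by
      field_simp
      linarith [hsum1]
    rw [this, hn1]
    field_simp
  rw [Finset.sum_congr rfl hkey, Finset.sum_const, nsmul_eq_mul, hcard]
  rw [mul_div_assoc]
end part5
end

section
/- In the setting of empirical p-values with overlapping calibration sets (Z a vector of i.i.d. P0 calibration points, D_i ⊂ indices of size n, p̂_i the empirical p-value of X_i computed from Z_{D_i}, X_1,…,X_m independent and independent of Z, the null test points distributed as P0, atomless score distribution), if there exists an integer ℓ ≥ 1 such that n = ℓm/α − 1 with ℓm/α an integer, then the FDR of the BH procedure at level α applied to (p̂_1,…,p̂_m) satisfies FDR ≤ m0·α/m, where m0 is the number of null indices. -/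
open MeasureTheory ProbabilityTheory Finset
open scoped Classical ENNReal

namespace BHaux


variable {m : ℕ} {α : ℝ}

lemma bhR_le (p : Fin m → ℝ) : bhR m α p ≤ m := by
  classical
  calc (Finset.univ.filter fun i => bhRejects m α p i).card ≤ (Finset.univ : Finset (Fin m)).card :=
        Finset.card_filter_le _ _
    _ = m := by simp

lemma bhRejects_mono {p p' : Fin m → ℝ} (h : ∀ j, p j ≤ p' j) {i : Fin m}
    (hr : bhRejects m α p' i) : bhRejects m α p i := by
  obtain ⟨k, hk, hpk, hcard⟩ := hr
  refine ⟨k, hk, (h i).trans hpk, hcard.trans (Finset.card_le_card ?_)⟩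
  intro j hj
  simp only [Finset.mem_filter, Finset.mem_univ, true_and] at hj ⊢
  exact (h j).trans hj

lemma bhR_mono {p p' : Fin m → ℝ} (h : ∀ j, p j ≤ p' j) : bhR m α p' ≤ bhR m α p := by
  apply Finset.card_le_card
  intro i hi
  simp only [Finset.mem_filter, Finset.mem_univ, true_and] at hi ⊢
  exact bhRejects_mono h hi

/-- On rejection, `bhR ≥ 1` and `p i` is below the BH threshold. -/
lemma bhRejects_le (hα : 0 < α) (hm : 0 < m) {p : Fin m → ℝ} {i : Fin m}
    (h : bhRejects m α p i) : 1 ≤ bhR m α p ∧ p i ≤ α * (bhR m α p) / m := by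
  classical
  set K : Finset ℕ := (Finset.Icc 1 m).filter
    (fun k => k ≤ (Finset.univ.filter fun j => p j ≤ α * (k : ℝ) / m).card) with hK
  have hne : K.Nonempty := by
    obtain ⟨k, hk, _, hcard⟩ := h
    exact ⟨k, by simp [hK, hk, hcard]⟩
  set km := K.max' hne with hkm
  have hkmK : km ∈ K := K.max'_mem hne
  have hkmIcc : km ∈ Finset.Icc 1 m := (Finset.mem_filter.mp hkmK).1
  have hkmcard : km ≤ (Finset.univ.filter fun j => p j ≤ α * (km : ℝ) / m).card :=
    (Finset.mem_filter.mp hkmK).2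
  have hthresh : ∀ {k : ℕ}, k ∈ K → α * k / m ≤ α * km / m := by
    intro k hkK
    have : k ≤ km := K.le_max' k hkK
    gcongr
  -- rejection is equivalent to being below threshold km
  have hiff : ∀ j : Fin m, bhRejects m α p j ↔ p j ≤ α * km / m := by
    intro j
    constructor
    · rintro ⟨k, hk, hpk, hcard⟩
      exact hpk.trans (hthresh (by simp [hK, hk, hcard]))
    · intro hj
      exact ⟨km, hkmIcc, hj, hkmcard⟩
  have hRcard : bhR m α p = (Finset.univ.filter fun j => p j ≤ α * (km : ℝ) / m).card := by
    unfold bhR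
    congr 1
    apply Finset.filter_congr
    intro j _
    simp [hiff j]
  -- show the card is exactly km
  have hge : km ≤ bhR m α p := by rw [hRcard]; exact hkmcard
  have hle : bhR m α p ≤ km := by
    by_contra hlt
    push_neg at hlt
    set c := bhR m α p with hc
    have hcm : c ≤ m := bhR_le p
    have hcK : c ∈ K := by
      refine Finset.mem_filter.mpr ⟨Finset.mem_Icc.mpr ⟨le_trans ?_ (le_of_lt hlt), hcm⟩, ?_⟩
      · exact (Finset.mem_Icc.mp hkmIcc).1
      · -- c ≤ card of filter at threshold c
        have hsub : (Finset.univ.filter fun j => p j ≤ α * (km : ℝ) / m) ⊆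
            (Finset.univ.filter fun j => p j ≤ α * (c : ℝ) / m) := by
          intro j hj
          simp only [Finset.mem_filter, Finset.mem_univ, true_and] at hj ⊢
          refine hj.trans ?_
          gcongr
        calc c = (Finset.univ.filter fun j => p j ≤ α * (km : ℝ) / m).card := hRcard
          _ ≤ _ := Finset.card_le_card hsub
    exact absurd (K.le_max' c hcK) (not_le.mpr hlt)
  have hR : bhR m α p = km := le_antisymm hle hge
  constructor
  · rw [hR]; exact (Finset.mem_Icc.mp hkmIcc).1
  · rw [hR]; exact (hiff i).mp h



/-- Cardinality of initial segments of `Fin N`. -/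
lemma card_filter_lt {N a : ℕ} (h : a ≤ N) :
    ((Finset.univ : Finset (Fin N)).filter fun s : Fin N => (s : ℕ) < a).card = a := by
  classical
  have he : ((Finset.univ : Finset (Fin N)).filter fun s : Fin N => (s : ℕ) < a)
      = (Finset.range a).attachFin (fun t ht => lt_of_lt_of_le (Finset.mem_range.mp ht) h) := by
    ext s
    simp [Finset.mem_attachFin, Finset.mem_range]
  rw [he, Finset.card_attachFin, Finset.card_range]

/-- For an antitone `r : Fin N → ℕ`, the level set `k ≤ r s` is an initial segment. -/
lemma antitone_level_iff {N : ℕ} {r : Fin N → ℕ} (hr : ∀ s t : Fin N, s ≤ t → r t ≤ r s)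
    (k : ℕ) (s : Fin N) :
    k ≤ r s ↔ (s : ℕ) < ((Finset.univ : Finset (Fin N)).filter fun t : Fin N => k ≤ r t).card := by
  constructor
  · intro h
    have hsub : ((Finset.univ : Finset (Fin N)).filter fun t : Fin N => (t : ℕ) < (s : ℕ) + 1) ⊆
        ((Finset.univ : Finset (Fin N)).filter fun t : Fin N => k ≤ r t) := by
      intro t htm
      simp only [Finset.mem_filter, Finset.mem_univ, true_and] at htm ⊢
      have ht : t ≤ s := by
        rw [Fin.le_def]; omega
      exact le_trans h (hr t s ht)
    have hcs := Finset.card_le_card hsub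
    rw [card_filter_lt s.isLt] at hcs
    omega
  · intro h
    by_contra hk
    push_neg at hk
    have hsub : ((Finset.univ : Finset (Fin N)).filter fun t : Fin N => k ≤ r t) ⊆
        ((Finset.univ : Finset (Fin N)).filter fun t : Fin N => (t : ℕ) < (s : ℕ)) := by
      intro t htm
      simp only [Finset.mem_filter, Finset.mem_univ, true_and] at htm ⊢
      by_contra hts
      push_neg at hts
      have hst : s ≤ t := Fin.le_def.mpr hts
      exact absurd (le_trans htm (hr s t hst)) (not_le.mpr hk)
    have hcs := Finset.card_le_card hsub
    rw [card_filter_lt (le_of_lt s.isLt)] at hcs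
    omega

/-- The deterministic telescoping bound at the heart of the conformal BH argument. -/
lemma telescope_bound (m ℓ N : ℕ) (r : Fin N → ℕ)
    (hr : ∀ s t : Fin N, s ≤ t → r t ≤ r s) (hrm : ∀ s, r s ≤ m) :
    ∑ s : Fin N, (if (s : ℕ) + 1 ≤ ℓ * r s then ((r s : ℝ))⁻¹ else 0) ≤ (ℓ : ℝ) := by
  classical
  set b : ℕ → ℕ := fun k => ((Finset.univ : Finset (Fin N)).filter fun t : Fin N => k ≤ r t).card with hb
  have hbmono : ∀ k, b (k + 1) ≤ b k := by
    intro k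
    apply Finset.card_le_card
    intro t ht
    simp only [hb, Finset.mem_filter, Finset.mem_univ, true_and] at ht ⊢
    omega
  have hbN : ∀ k, b k ≤ N := fun k => le_trans (Finset.card_filter_le _ _) (by simp)
  set F : ℕ → ℝ := fun k => ((min (ℓ * k) (b k) : ℕ) : ℝ) / ((k : ℕ) : ℝ) with hF
  set A : ℕ → Finset (Fin N) := fun k =>
    (Finset.univ : Finset (Fin N)).filter (fun s => r s = k ∧ (s : ℕ) + 1 ≤ ℓ * k) with hA
  -- fiberwise regrouping
  have hgroup :
      ∑ s : Fin N, (if (s : ℕ) + 1 ≤ ℓ * r s then ((r s : ℝ))⁻¹ else 0)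
        = ∑ k ∈ Finset.range (m + 1), ∑ s ∈ (Finset.univ : Finset (Fin N)).filter
            (fun s => r s = k), (if (s : ℕ) + 1 ≤ ℓ * r s then ((r s : ℝ))⁻¹ else 0) := by
    rw [Finset.sum_fiberwise_of_maps_to]
    intro s _
    simp [Nat.lt_succ_iff, hrm s]
  rw [hgroup]
  -- each fiber sums to |A k| / k
  have hfiber : ∀ k, ∑ s ∈ (Finset.univ : Finset (Fin N)).filter (fun s => r s = k),
      (if (s : ℕ) + 1 ≤ ℓ * r s then ((r s : ℝ))⁻¹ else 0) = ((A k).card : ℝ) * ((k : ℝ))⁻¹ := by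
    intro k
    have : ∀ s ∈ (Finset.univ : Finset (Fin N)).filter (fun s => r s = k),
        (if (s : ℕ) + 1 ≤ ℓ * r s then ((r s : ℝ))⁻¹ else 0)
          = (if (s : ℕ) + 1 ≤ ℓ * k then ((k : ℝ))⁻¹ else 0) := by
      intro s hs
      simp only [Finset.mem_filter, Finset.mem_univ, true_and] at hs
      rw [hs]
    rw [Finset.sum_congr rfl this, Finset.sum_ite, Finset.sum_const, Finset.sum_const_zero,
      add_zero, Finset.filter_filter, nsmul_eq_mul]
  -- the cardinality bound: |A k| + min (b (k+1)) (ℓ k) ≤ min (ℓ k) (b k)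
  have hcard : ∀ k, 1 ≤ k → (A k).card + min (b (k + 1)) (ℓ * k) ≤ min (ℓ * k) (b k) := by
    intro k hk
    have hdisj : Disjoint (A k)
        ((Finset.univ : Finset (Fin N)).filter fun s : Fin N => (s : ℕ) < min (b (k + 1)) (ℓ * k)) := by
      rw [Finset.disjoint_left]
      intro s hsA hsB
      simp only [hA, Finset.mem_filter, Finset.mem_univ, true_and] at hsA hsB
      have h1 : ¬ (k + 1 ≤ r s) := by omega
      rw [antitone_level_iff hr (k+1) s] at h1
      push_neg at h1
      change (b (k+1)) ≤ (s : ℕ) at h1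
      omega
    have hsub : A k ∪ ((Finset.univ : Finset (Fin N)).filter
          fun s => (s : ℕ) < min (b (k + 1)) (ℓ * k)) ⊆
        ((Finset.univ : Finset (Fin N)).filter fun s : Fin N => (s : ℕ) < min (ℓ * k) (b k)) := by
      intro s hs
      simp only [Finset.mem_union, hA, Finset.mem_filter, Finset.mem_univ, true_and] at hs ⊢
      rcases hs with ⟨hsr, hsl⟩ | hs
      · have : k ≤ r s := le_of_eq hsr.symm
        rw [antitone_level_iff hr k s] at this
        change (s : ℕ) < b k at this
        omega
      · have h2 := hbmono k
        omega
    have hA2 := Finset.card_le_card hsub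
    rw [Finset.card_union_of_disjoint hdisj] at hA2
    rw [card_filter_lt (le_trans (min_le_right _ _) (hbN _)),
      card_filter_lt (le_trans (min_le_left _ _) (hbN (k+1)))] at hA2
    exact hA2
  -- cross bound: k * min (ℓ(k+1)) (b (k+1)) ≤ (k+1) * min (b (k+1)) (ℓ k)
  have hcross : ∀ k, k * min (ℓ * (k + 1)) (b (k + 1)) ≤ (k + 1) * min (b (k + 1)) (ℓ * k) := by
    intro k
    rcases le_or_gt (b (k+1)) (ℓ * k) with h | h
    · have h1 : min (ℓ * (k+1)) (b (k+1)) ≤ b (k+1) := min_le_right _ _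
      have h2 : min (b (k+1)) (ℓ * k) = b (k+1) := min_eq_left h
      rw [h2]
      calc k * min (ℓ * (k + 1)) (b (k + 1)) ≤ k * b (k+1) := Nat.mul_le_mul_left _ h1
        _ ≤ (k+1) * b (k+1) := Nat.mul_le_mul_right _ (by omega)
    · have h2 : min (b (k+1)) (ℓ * k) = ℓ * k := min_eq_right (le_of_lt h)
      rw [h2]
      calc k * min (ℓ * (k + 1)) (b (k + 1)) ≤ k * (ℓ * (k+1)) :=
            Nat.mul_le_mul_left _ (min_le_left _ _)
        _ = (k+1) * (ℓ * k) := by ring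
  -- per-k bound by telescoping differences of F
  have hperk : ∀ k, 1 ≤ k → ((A k).card : ℝ) * ((k : ℝ))⁻¹ ≤ F k - F (k + 1) := by
    intro k hk
    have hkpos : (0 : ℝ) < (k : ℝ) := by exact_mod_cast hk
    have hk1pos : (0 : ℝ) < (((k + 1 : ℕ)) : ℝ) := by positivity
    have h1 : ((A k).card : ℝ) + ((min (b (k + 1)) (ℓ * k) : ℕ) : ℝ)
        ≤ ((min (ℓ * k) (b k) : ℕ) : ℝ) := by exact_mod_cast hcard k hk
    have h2 : ((min (ℓ * (k + 1)) (b (k + 1)) : ℕ) : ℝ) / (((k + 1 : ℕ)) : ℝ)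
        ≤ ((min (b (k + 1)) (ℓ * k) : ℕ) : ℝ) / (k : ℝ) := by
      rw [div_le_div_iff₀ hk1pos hkpos]
      have h' : (k : ℝ) * ((min (ℓ * (k + 1)) (b (k + 1)) : ℕ) : ℝ)
          ≤ (((k + 1 : ℕ)) : ℝ) * ((min (b (k + 1)) (ℓ * k) : ℕ) : ℝ) := by
        exact_mod_cast hcross k
      linarith
    have e1 : F k = ((min (ℓ * k) (b k) : ℕ) : ℝ) / (k : ℝ) := rfl
    have e2 : F (k + 1) = ((min (ℓ * (k + 1)) (b (k + 1)) : ℕ) : ℝ) / (((k + 1 : ℕ)) : ℝ) := rfl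
    rw [e1, e2, ← div_eq_mul_inv]
    have h3 : ((A k).card : ℝ) / (k : ℝ)
        ≤ (((min (ℓ * k) (b k) : ℕ) : ℝ) - ((min (b (k + 1)) (ℓ * k) : ℕ) : ℝ)) / (k : ℝ) := by
      gcongr
      linarith
    have h4 : (((min (ℓ * k) (b k) : ℕ) : ℝ) - ((min (b (k + 1)) (ℓ * k) : ℕ) : ℝ)) / (k : ℝ)
        = ((min (ℓ * k) (b k) : ℕ) : ℝ) / (k : ℝ)
          - ((min (b (k + 1)) (ℓ * k) : ℕ) : ℝ) / (k : ℝ) := sub_div _ _ _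
    rw [h4] at h3
    linarith
  -- assemble
  calc ∑ k ∈ Finset.range (m + 1), ∑ s ∈ (Finset.univ : Finset (Fin N)).filter
        (fun s => r s = k), (if (s : ℕ) + 1 ≤ ℓ * r s then ((r s : ℝ))⁻¹ else 0)
      = ∑ k ∈ Finset.range (m + 1), ((A k).card : ℝ) * ((k : ℝ))⁻¹ := by
        exact Finset.sum_congr rfl fun k _ => hfiber k
    _ = (∑ j ∈ Finset.range m, ((A (j + 1)).card : ℝ) * (((j + 1 : ℕ) : ℝ))⁻¹)
          + ((A 0).card : ℝ) * ((0 : ℕ) : ℝ)⁻¹ := Finset.sum_range_succ' _ m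
    _ ≤ (∑ j ∈ Finset.range m, (F (j + 1) - F (j + 1 + 1))) + 0 := by
        gcongr ?_ + ?_
        · apply Finset.sum_le_sum
          intro j _
          exact hperk (j + 1) (by omega)
        · have : A 0 = ∅ := by
            apply Finset.filter_false_of_mem
            intro s _
            simp
          rw [this]
          simp
    _ = F 1 - F (m + 1) + 0 := by
        congr 1
        exact Finset.sum_range_sub' (fun j => F (j + 1)) m
    _ ≤ F 1 := by
        have : (0 : ℝ) ≤ F (m + 1) := by
          simp only [hF]
          positivity
        linarith
    _ ≤ (ℓ : ℝ) := by
        have e1 : F 1 = ((min (ℓ * 1) (b 1) : ℕ) : ℝ) / ((1 : ℕ) : ℝ) := rfl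
        rw [e1]
        have h1 : ((min (ℓ * 1) (b 1) : ℕ) : ℝ) ≤ (ℓ : ℝ) := by
          have : min (ℓ * 1) (b 1) ≤ ℓ * 1 := min_le_left _ _
          have h2 : min (ℓ * 1) (b 1) ≤ ℓ := by omega
          exact_mod_cast h2
        simpa using h1



variable {Ω : Type*} [MeasurableSpace Ω] {μ : Measure Ω} [IsProbabilityMeasure μ]

/-- The law of a finite tuple of jointly independent random variables is the product measure. -/
lemma map_tuple_eq_pi {ι : Type*} {K : Type*} [Fintype K]
    (f : ι → Ω → ℝ) (hf : ∀ i, Measurable (f i))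
    (hI : iIndepFun f μ)
    (g : K → ι) (hg : Function.Injective g) :
    μ.map (fun ω (k : K) => f (g k) ω) = Measure.pi (fun k => μ.map (f (g k))) := by
  classical
  haveI : ∀ k : K, IsProbabilityMeasure (μ.map (f (g k))) :=
    fun k => Measure.isProbabilityMeasure_map (hf (g k)).aemeasurable
  have htuple : Measurable (fun ω (k : K) => f (g k) ω) :=
    measurable_pi_lambda _ (fun k => hf (g k))
  refine (Measure.pi_eq (μ := fun k => μ.map (f (g k))) fun s hs => ?_).symm
  rw [Measure.map_apply htuple (MeasurableSet.univ_pi hs)]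
  have hpre : (fun ω (k : K) => f (g k) ω) ⁻¹' (Set.pi Set.univ s)
      = ⋂ k : K, f (g k) ⁻¹' (s k) := by
    ext ω
    simp [Set.mem_univ_pi, Set.mem_iInter]
  rw [hpre]
  -- the per-index sets, defined on the image of g
  set setsFun : ι → Set ℝ := fun i => ⋂ (k : K) (_ : g k = i), s k with hsetsFun
  have hsets_g : ∀ k : K, setsFun (g k) = s k := by
    intro k
    apply subset_antisymm
    · intro x hx
      simp only [hsetsFun, Set.mem_iInter] at hx
      exact hx k rfl
    · refine Set.subset_iInter₂ ?_
      intro k' hk'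
      rw [hg hk']
  have hinter : (⋂ k : K, f (g k) ⁻¹' (s k))
      = ⋂ i ∈ (Finset.univ.image g : Finset ι), f i ⁻¹' (setsFun i) := by
    ext ω
    simp only [Set.mem_iInter, Set.mem_preimage, Finset.mem_image, Finset.mem_univ, true_and]
    constructor
    · rintro h i ⟨k, rfl⟩
      rw [hsets_g k]
      exact h k
    · intro h k
      have := h (g k) ⟨k, rfl⟩
      rwa [hsets_g k] at this
  rw [hinter]
  have hmul := (iIndepFun_iff_measure_inter_preimage_eq_mul.mp hI) (Finset.univ.image g) (sets := setsFun) ?_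
  · rw [hmul]
    rw [Finset.prod_image (fun k _ k' _ h => hg h)]
    apply Finset.prod_congr rfl
    intro k _
    rw [hsets_g k, Measure.map_apply (hf (g k)) (hs k)]
  · intro i hi
    obtain ⟨k, _, rfl⟩ := Finset.mem_image.mp hi
    rw [hsets_g k]
    exact hs k

/-- Two injective reindexings with equal marginals give tuples with the same law;
integrals of a measurable function agree. -/
lemma integral_tuple_congr {ι : Type*} {K : Type*} [Fintype K]
    (f : ι → Ω → ℝ) (hf : ∀ i, Measurable (f i))
    (hI : iIndepFun f μ)
    (g g' : K → ι) (hg : Function.Injective g) (hg' : Function.Injective g')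
    (hmarg : ∀ k, μ.map (f (g' k)) = μ.map (f (g k)))
    (Φ : (K → ℝ) → ℝ) (hΦ : Measurable Φ) :
    ∫ ω, Φ (fun k => f (g' k) ω) ∂μ = ∫ ω, Φ (fun k => f (g k) ω) ∂μ := by
  have htuple : Measurable (fun ω (k : K) => f (g k) ω) :=
    measurable_pi_lambda _ (fun k => hf (g k))
  have htuple' : Measurable (fun ω (k : K) => f (g' k) ω) :=
    measurable_pi_lambda _ (fun k => hf (g' k))
  have h1 : ∫ ω, Φ (fun k => f (g' k) ω) ∂μ = ∫ y, Φ y ∂(μ.map (fun ω (k : K) => f (g' k) ω)) :=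
    (integral_map htuple'.aemeasurable hΦ.aestronglyMeasurable).symm
  have h2 : ∫ ω, Φ (fun k => f (g k) ω) ∂μ = ∫ y, Φ y ∂(μ.map (fun ω (k : K) => f (g k) ω)) :=
    (integral_map htuple.aemeasurable hΦ.aestronglyMeasurable).symm
  rw [h1, h2, map_tuple_eq_pi f hf hI g hg, map_tuple_eq_pi f hf hI g' hg',
    show (fun k => μ.map (f (g' k))) = (fun k => μ.map (f (g k))) from funext hmarg]



variable {m : ℕ}

/-- The index type for the finite tuple of relevant scores. -/
abbrev KT (D : Fin m → Finset ℕ) : Type _ := Fin m ⊕ {u // u ∈ Finset.univ.biUnion D}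

/-- Inclusion of the union-membership from calibration-set membership. -/
lemma mem_biUnion_of_mem (D : Fin m → Finset ℕ) {i : Fin m} {u : ℕ} (hu : u ∈ D i) :
    u ∈ Finset.univ.biUnion D :=
  Finset.mem_biUnion.mpr ⟨i, Finset.mem_univ _, hu⟩

/-- Embedding of the exchangeable block `{Xᵢ} ∪ Z_{Dᵢ}` into the index type. -/
def eiOf (D : Fin m → Finset ℕ) (i : Fin m) : Option {u // u ∈ D i} → KT D := fun c =>
  c.elim (Sum.inl i) (fun u => Sum.inr ⟨u.1, mem_biUnion_of_mem D u.2⟩)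

lemma eiOf_injective (D : Fin m → Finset ℕ) (i : Fin m) : Function.Injective (eiOf D i) := by
  intro c c' h
  cases c with
  | none => cases c' with
    | none => rfl
    | some u => simp [eiOf] at h
  | some u => cases c' with
    | none => simp [eiOf] at h
    | some u' =>
      simp only [eiOf, Option.elim_some, Sum.inr.injEq, Subtype.mk.injEq] at h
      exact congrArg _ (Subtype.ext h)

/-- Reindexing map of the coordinates induced by a permutation of the exchangeable block. -/
noncomputable def gammaOf (D : Fin m → Finset ℕ) (i : Fin m)
    (φ : Equiv.Perm (Option {u // u ∈ D i})) : KT D → KT D := fun k =>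
  if h : ∃ c, eiOf D i c = k then eiOf D i (φ h.choose) else k

lemma gammaOf_ei (D : Fin m → Finset ℕ) (i : Fin m) (φ : Equiv.Perm (Option {u // u ∈ D i}))
    (c : Option {u // u ∈ D i}) : gammaOf D i φ (eiOf D i c) = eiOf D i (φ c) := by
  have h : ∃ c', eiOf D i c' = eiOf D i c := ⟨c, rfl⟩
  rw [gammaOf, dif_pos h]
  exact congrArg _ (congrArg _ (eiOf_injective D i h.choose_spec))

lemma gammaOf_not (D : Fin m → Finset ℕ) (i : Fin m) (φ : Equiv.Perm (Option {u // u ∈ D i}))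
    {k : KT D} (h : ∀ c, eiOf D i c ≠ k) : gammaOf D i φ k = k := by
  rw [gammaOf, dif_neg (by push_neg; exact h)]

lemma gammaOf_injective (D : Fin m → Finset ℕ) (i : Fin m)
    (φ : Equiv.Perm (Option {u // u ∈ D i})) : Function.Injective (gammaOf D i φ) := by
  intro k1 k2 h
  by_cases h1 : ∃ c, eiOf D i c = k1 <;> by_cases h2 : ∃ c, eiOf D i c = k2
  · obtain ⟨c1, rfl⟩ := h1
    obtain ⟨c2, rfl⟩ := h2
    rw [gammaOf_ei, gammaOf_ei] at h
    exact congrArg _ (φ.injective (eiOf_injective D i h))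
  · rw [gammaOf_not D i φ (not_exists.mp h2)] at h
    obtain ⟨c1, rfl⟩ := h1
    rw [gammaOf_ei] at h
    exact absurd ⟨φ c1, h⟩ h2
  · rw [gammaOf_not D i φ (not_exists.mp h1)] at h
    obtain ⟨c2, rfl⟩ := h2
    rw [gammaOf_ei] at h
    exact absurd ⟨φ c2, h.symm⟩ h1
  · rwa [gammaOf_not D i φ (not_exists.mp h1), gammaOf_not D i φ (not_exists.mp h2)] at h

/-- The p-value vector as a function of the tuple of scores. -/
noncomputable def pvOf (n : ℕ) (D : Fin m → Finset ℕ) (y : KT D → ℝ) : Fin m → ℝ := fun i' =>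
  (1 / (n : ℝ)) * ∑ u ∈ (D i').attach,
    if y (Sum.inl i') ≤ y (Sum.inr ⟨u.1, mem_biUnion_of_mem D u.2⟩) then (1 : ℝ) else 0

/-- The per-hypothesis FDP contribution as a function of the tuple of scores. -/
noncomputable def gOf (n : ℕ) (α : ℝ) (D : Fin m → Finset ℕ) (i : Fin m) (y : KT D → ℝ) : ℝ :=
  if bhRejects m α (pvOf n D y) i then ((bhR m α (pvOf n D y) : ℝ))⁻¹ else 0

lemma gOf_nonneg (n : ℕ) (α : ℝ) (D : Fin m → Finset ℕ) (i : Fin m) (y : KT D → ℝ) :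
    0 ≤ gOf n α D i y := by
  rw [gOf]
  split
  · positivity
  · exact le_refl _

lemma gOf_le_one {n : ℕ} {α : ℝ} (hα : 0 < α) (hm : 0 < m) (D : Fin m → Finset ℕ) (i : Fin m)
    (y : KT D → ℝ) : gOf n α D i y ≤ 1 := by
  rw [gOf]
  split
  · rename_i h
    have h1 := (bhRejects_le hα hm h).1
    have : (1 : ℝ) ≤ (bhR m α (pvOf n D y) : ℝ) := by exact_mod_cast h1
    rw [inv_le_one_iff₀]
    right
    exact this
  · norm_num

lemma gOf_measurable (n : ℕ) (α : ℝ) (D : Fin m → Finset ℕ) (i : Fin m) :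
    Measurable (gOf n α D i) := by
  classical
  set B : (KT D → ℝ) → (Fin m → {u // u ∈ Finset.univ.biUnion D} → Bool) :=
    fun y i' u => if y (Sum.inl i') ≤ y (Sum.inr u) then true else false with hBdef
  have hB : Measurable B := by
    apply measurable_pi_lambda
    intro i'
    apply measurable_pi_lambda
    intro u
    exact Measurable.ite
      (measurableSet_le (measurable_pi_apply _) (measurable_pi_apply _))
      measurable_const measurable_const
  set pvB : (Fin m → {u // u ∈ Finset.univ.biUnion D} → Bool) → Fin m → ℝ := fun b i' =>
    (1 / (n : ℝ)) * ∑ u ∈ (D i').attach,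
      if b i' ⟨u.1, mem_biUnion_of_mem D u.2⟩ then (1 : ℝ) else 0 with hpvBdef
  have hfac : ∀ y, pvOf n D y = pvB (B y) := by
    intro y
    funext i'
    rw [pvOf]
    simp only [hpvBdef]
    congr 1
    apply Finset.sum_congr rfl
    intro u _
    by_cases h : y (Sum.inl i') ≤ y (Sum.inr ⟨u.1, mem_biUnion_of_mem D u.2⟩) <;>
      simp [hBdef, h]
  have heq : gOf n α D i =
      (fun b => if bhRejects m α (pvB b) i then ((bhR m α (pvB b) : ℝ))⁻¹ else 0) ∘ B := by
    funext y
    simp only [Function.comp_apply, gOf, hfac y]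
  rw [heq]
  exact (measurable_of_countable _).comp hB

/-- The key deterministic/pointwise bound: summing the FDP contribution of a null `i`
over all permutations of its exchangeable block. -/
lemma gOf_perm_sum_le {n : ℕ} {α : ℝ} (D : Fin m → Finset ℕ) (i : Fin m)
    (hm : 0 < m) (hn : 0 < n) (hα0 : 0 < α) (ℓ : ℕ)
    (hNα : (ℓ : ℝ) * m = α * ((n : ℝ) + 1)) (hDi : (D i).card = n) (y : KT D → ℝ) :
    ∑ φ : Equiv.Perm (Option {u // u ∈ D i}), gOf n α D i (y ∘ gammaOf D i φ)
      ≤ (n.factorial : ℝ) * ℓ := by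
  classical
  have hcardDT : Fintype.card {u // u ∈ D i} = n := by rw [Fintype.card_coe, hDi]
  have hcardO : Fintype.card (Option {u // u ∈ D i}) = n + 1 := by
    rw [Fintype.card_option, hcardDT]
  -- sorted enumeration of the block values
  set w : Fin (n + 1) → ℝ :=
    fun t => y (eiOf D i ((Fintype.equivFinOfCardEq hcardO).symm t)) with hwdef
  set σE : Fin (n + 1) ≃ Option {u // u ∈ D i} :=
    ((Fin.revPerm).trans (Tuple.sort w)).trans (Fintype.equivFinOfCardEq hcardO).symm with hσdef
  set v : Fin (n + 1) → ℝ := fun t => y (eiOf D i (σE t)) with hvdef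
  have hv : ∀ {t t' : Fin (n + 1)}, t ≤ t' → v t' ≤ v t := by
    intro t t' h
    have hmono := Tuple.monotone_sort w
    have hrev : Fin.rev t' ≤ Fin.rev t := Fin.rev_le_rev.mpr h
    exact hmono hrev
  -- the parametrization of permutations by (rank of Xᵢ, relative order of the Zs)
  set Θ : Fin (n + 1) × ({u // u ∈ D i} ≃ Fin n) → Equiv.Perm (Option {u // u ∈ D i}) :=
    fun p => ((Equiv.optionCongr p.2).trans (finSuccEquiv' p.1).symm).trans σE with hΘdef
  have hΘnone : ∀ s ψ, Θ (s, ψ) none = σE s := by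
    intro s ψ
    simp [hΘdef, finSuccEquiv'_symm_none]
  have hΘsome : ∀ s ψ u, Θ (s, ψ) (some u) = σE (s.succAbove (ψ u)) := by
    intro s ψ u
    simp [hΘdef, finSuccEquiv'_symm_some]
  have hΘbij : Function.Bijective Θ := by
    rw [Fintype.bijective_iff_injective_and_card]
    constructor
    · rintro ⟨s, ψ⟩ ⟨s', ψ'⟩ h
      have h0 : s = s' := by
        have := congrArg (fun (e : Equiv.Perm (Option {u // u ∈ D i})) => e none) h
        simp only [hΘnone] at this
        exact σE.injective this
      subst h0
      have h1 : ψ = ψ' := by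
        apply Equiv.ext
        intro u
        have := congrArg (fun (e : Equiv.Perm (Option {u // u ∈ D i})) => e (some u)) h
        simp only [hΘsome] at this
        exact Fin.succAbove_right_injective (σE.injective this)
      rw [h1]
    · rw [Fintype.card_prod, Fintype.card_perm, hcardO, Fintype.card_fin,
        Fintype.card_equiv (Fintype.equivFinOfCardEq hcardDT), hcardDT]
      exact (Nat.factorial_succ n).symm
  rw [← Fintype.sum_bijective Θ hΘbij
    (fun p => gOf n α D i (y ∘ gammaOf D i (Θ p))) _ (fun p => rfl)]
  rw [Fintype.sum_prod_type_right]
  -- bound the inner sum for each fixed relative order ψ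
  have hinner : ∀ ψ : {u // u ∈ D i} ≃ Fin n,
      ∑ s : Fin (n + 1), gOf n α D i (y ∘ gammaOf D i (Θ (s, ψ))) ≤ (ℓ : ℝ) := by
    intro ψ
    -- values of the permuted tuple
    have hval_i : ∀ s : Fin (n + 1), (y ∘ gammaOf D i (Θ (s, ψ))) (Sum.inl i) = v s := by
      intro s
      show y (gammaOf D i (Θ (s, ψ)) (eiOf D i none)) = v s
      rw [gammaOf_ei, hΘnone]
    have hval_mem : ∀ (s : Fin (n + 1)) (u : {u // u ∈ D i}),
        (y ∘ gammaOf D i (Θ (s, ψ))) (Sum.inr ⟨u.1, mem_biUnion_of_mem D u.2⟩)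
          = v (s.succAbove (ψ u)) := by
      intro s u
      show y (gammaOf D i (Θ (s, ψ)) (eiOf D i (some u))) = _
      rw [gammaOf_ei, hΘsome]
    have hval_inl : ∀ (s : Fin (n + 1)) (j : Fin m), j ≠ i →
        (y ∘ gammaOf D i (Θ (s, ψ))) (Sum.inl j) = y (Sum.inl j) := by
      intro s j hj
      show y (gammaOf D i (Θ (s, ψ)) (Sum.inl j)) = y (Sum.inl j)
      rw [gammaOf_not]
      intro c
      cases c with
      | none =>
        simp only [eiOf, Option.elim_none, ne_eq, Sum.inl.injEq]
        exact fun h => hj h.symm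
      | some u => simp [eiOf]
    have hval_inr : ∀ (s : Fin (n + 1)) (u : {u // u ∈ Finset.univ.biUnion D}), u.1 ∉ D i →
        (y ∘ gammaOf D i (Θ (s, ψ))) (Sum.inr u) = y (Sum.inr u) := by
      intro s u hu
      show y (gammaOf D i (Θ (s, ψ)) (Sum.inr u)) = y (Sum.inr u)
      rw [gammaOf_not]
      intro c
      cases c with
      | none => simp [eiOf]
      | some u' =>
        simp only [eiOf, Option.elim_some, ne_eq, Sum.inr.injEq, Subtype.mk.injEq]
        intro h
        exact hu (h ▸ u'.2)
    -- monotonicity of succAbove in the pivot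
    have hsucc : ∀ {s s' : Fin (n + 1)} (t : Fin n), s ≤ s' →
        s'.succAbove t ≤ s.succAbove t := by
      intro s s' t h
      by_cases h1 : t.castSucc < s
      · rw [Fin.succAbove_of_castSucc_lt _ _ h1,
          Fin.succAbove_of_castSucc_lt _ _ (lt_of_lt_of_le h1 h)]
      · push_neg at h1
        rw [Fin.succAbove_of_le_castSucc _ _ h1]
        by_cases h2 : t.castSucc < s'
        · rw [Fin.succAbove_of_castSucc_lt _ _ h2]
          exact Fin.castSucc_lt_succ.le
        · push_neg at h2
          rw [Fin.succAbove_of_le_castSucc _ _ h2]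
    -- the p-value vectors along the family
    have hind : ∀ {A A' B B' : ℝ}, A' ≤ A → B ≤ B' →
        (if A ≤ B then (1 : ℝ) else 0) ≤ (if A' ≤ B' then (1 : ℝ) else 0) := by
      intro A A' B B' hA hB
      split_ifs with h1 h2
      · exact le_refl _
      · exact absurd (le_trans hA (le_trans h1 hB)) h2
      · norm_num
      · exact le_refl _
    have hq_mono : ∀ s s' : Fin (n + 1), s ≤ s' → ∀ j,
        pvOf n D (y ∘ gammaOf D i (Θ (s, ψ))) j ≤ pvOf n D (y ∘ gammaOf D i (Θ (s', ψ))) j := by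
      intro s s' hss j
      rw [pvOf, pvOf]
      apply mul_le_mul_of_nonneg_left _ (by positivity)
      apply Finset.sum_le_sum
      intro u _
      apply hind
      · -- the Xⱼ value is nonincreasing in s
        by_cases hji : j = i
        · subst hji
          rw [hval_i s, hval_i s']
          exact hv hss
        · rw [hval_inl s j hji, hval_inl s' j hji]
      · -- the Z value is nondecreasing in s
        by_cases hui : u.1 ∈ D i
        · have e1 := hval_mem s ⟨u.1, hui⟩
          have e2 := hval_mem s' ⟨u.1, hui⟩
          calc (y ∘ gammaOf D i (Θ (s, ψ))) (Sum.inr ⟨u.1, mem_biUnion_of_mem D u.2⟩)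
              = v (s.succAbove (ψ ⟨u.1, hui⟩)) := e1
            _ ≤ v (s'.succAbove (ψ ⟨u.1, hui⟩)) := hv (hsucc _ hss)
            _ = _ := e2.symm
        · rw [hval_inr s _ hui, hval_inr s' _ hui]
    -- lower bound on the p-value of the tested hypothesis
    have hq_i : ∀ s : Fin (n + 1), ((s : ℕ) : ℝ) / n ≤
        pvOf n D (y ∘ gammaOf D i (Θ (s, ψ))) i := by
      intro s
      rw [pvOf]
      have hterm : ∀ u ∈ (D i).attach,
          (if ((ψ u).castSucc < s) then (1 : ℝ) else 0) ≤
            (if (y ∘ gammaOf D i (Θ (s, ψ))) (Sum.inl i) ≤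
              (y ∘ gammaOf D i (Θ (s, ψ))) (Sum.inr ⟨u.1, mem_biUnion_of_mem D u.2⟩)
              then (1 : ℝ) else 0) := by
        intro u _
        by_cases h : (ψ u).castSucc < s
        · rw [if_pos h, if_pos]
          have e1 := hval_i s
          have e2 := hval_mem s u
          rw [e1, e2, Fin.succAbove_of_castSucc_lt _ _ h]
          exact hv h.le
        · rw [if_neg h]
          split <;> norm_num
      have hsum : ∑ u ∈ (D i).attach, (if ((ψ u).castSucc < s) then (1 : ℝ) else 0)
          = ((s : ℕ) : ℝ) := by
        rw [← Finset.univ_eq_attach]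
        have : ∑ u : {u // u ∈ D i}, (if ((ψ u).castSucc < s) then (1 : ℝ) else 0)
            = ∑ t : Fin n, (if (t.castSucc < s) then (1 : ℝ) else 0) :=
          Equiv.sum_comp ψ (fun t => if (t.castSucc < s) then (1 : ℝ) else 0)
        rw [this]
        have hcongr : ((Finset.univ : Finset (Fin n)).filter fun t => t.castSucc < s)
            = ((Finset.univ : Finset (Fin n)).filter fun t : Fin n => (t : ℕ) < (s : ℕ)) := by
          apply Finset.filter_congr
          intro t _
          simp [Fin.lt_def]
        rw [Finset.sum_boole, hcongr, card_filter_lt (Nat.lt_succ_iff.mp s.isLt)]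
      calc ((s : ℕ) : ℝ) / n = (1 / (n : ℝ)) * ((s : ℕ) : ℝ) := by ring
        _ = (1 / (n : ℝ)) * ∑ u ∈ (D i).attach,
              (if ((ψ u).castSucc < s) then (1 : ℝ) else 0) := by rw [hsum]
        _ ≤ _ := by
            apply mul_le_mul_of_nonneg_left (Finset.sum_le_sum hterm) (by positivity)
    -- rejection forces s + 1 ≤ ℓ * R
    set r : Fin (n + 1) → ℕ := fun s => bhR m α (pvOf n D (y ∘ gammaOf D i (Θ (s, ψ)))) with hrdef
    have hrej : ∀ s : Fin (n + 1),
        bhRejects m α (pvOf n D (y ∘ gammaOf D i (Θ (s, ψ)))) i → (s : ℕ) + 1 ≤ ℓ * r s := by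
      intro s hs
      obtain ⟨h1, h2⟩ := bhRejects_le hα0 hm hs
      have hm' : (0 : ℝ) < m := by exact_mod_cast hm
      have hn' : (0 : ℝ) < n := by exact_mod_cast hn
      have hR1 : (1 : ℝ) ≤ (r s : ℝ) := by exact_mod_cast h1
      have h5 : ((s : ℕ) : ℝ) / n ≤ α * (r s : ℝ) / m := le_trans (hq_i s) h2
      have h6 : ((s : ℕ) : ℝ) * m ≤ α * (r s : ℝ) * n := by
        rw [div_le_div_iff₀ hn' hm'] at h5
        linarith
      have h7 : α * (r s : ℝ) * n = (ℓ : ℝ) * m * (r s : ℝ) - α * (r s : ℝ) := by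
        have : α * (r s : ℝ) * n = (α * ((n : ℝ) + 1)) * (r s : ℝ) - α * (r s : ℝ) := by ring
        rw [this, ← hNα]
      have h8 : (0 : ℝ) < α * (r s : ℝ) := by positivity
      have h9 : ((s : ℕ) : ℝ) * m < ((ℓ : ℝ) * (r s : ℝ)) * m := by
        have : (ℓ : ℝ) * m * (r s : ℝ) = ((ℓ : ℝ) * (r s : ℝ)) * m := by ring
        rw [← this]
        linarith
      have h10 : ((s : ℕ) : ℝ) < (ℓ : ℝ) * (r s : ℝ) := lt_of_mul_lt_mul_right h9 (le_of_lt hm')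
      have h11 : (s : ℕ) < ℓ * r s := by exact_mod_cast h10
      omega
    -- antitone rejection counts along the family
    have hr_anti : ∀ s t : Fin (n + 1), s ≤ t → r t ≤ r s := by
      intro s t hst
      exact bhR_mono (hq_mono s t hst)
    have hr_le : ∀ s, r s ≤ m := fun s => bhR_le _
    calc ∑ s : Fin (n + 1), gOf n α D i (y ∘ gammaOf D i (Θ (s, ψ)))
        ≤ ∑ s : Fin (n + 1), (if (s : ℕ) + 1 ≤ ℓ * r s then ((r s : ℝ))⁻¹ else 0) := by
          apply Finset.sum_le_sum
          intro s _
          rw [gOf]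
          split
          · rename_i hs
            rw [if_pos (hrej s hs)]
          · rename_i hs
            split <;> positivity
      _ ≤ (ℓ : ℝ) := telescope_bound m ℓ (n + 1) r hr_anti hr_le
  calc ∑ ψ : {u // u ∈ D i} ≃ Fin n, ∑ s : Fin (n + 1),
        gOf n α D i (y ∘ gammaOf D i (Θ (s, ψ)))
      ≤ ∑ _ψ : {u // u ∈ D i} ≃ Fin n, (ℓ : ℝ) := Finset.sum_le_sum (fun ψ _ => hinner ψ)
    _ = (n.factorial : ℝ) * ℓ := by
        rw [Finset.sum_const, nsmul_eq_mul, Finset.card_univ,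
          Fintype.card_equiv (Fintype.equivFinOfCardEq hcardDT), hcardDT]

/-- Pointwise decomposition of the FDP as a sum over null hypotheses. -/
lemma bhFDP_eq_sum (m : ℕ) (α : ℝ) (H0 : Finset (Fin m)) (p : Fin m → ℝ) :
    bhFDP m α H0 p = ∑ i ∈ H0, (if bhRejects m α p i then ((bhR m α p : ℝ))⁻¹ else 0) := by
  classical
  by_cases hR : bhR m α p = 0
  · have hnone : ∀ i : Fin m, ¬ bhRejects m α p i := by
      intro i hi
      have hpos : 0 < bhR m α p :=
        Finset.card_pos.mpr ⟨i, Finset.mem_filter.mpr ⟨Finset.mem_univ _, hi⟩⟩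
      omega
    rw [bhFDP, bhFP, Finset.filter_false_of_mem (fun i _ => hnone i)]
    simp [hnone]
  · rw [bhFDP, bhFP, Finset.card_filter]
    push_cast
    rw [Finset.sum_div]
    apply Finset.sum_congr rfl
    intro i _
    split_ifs with h
    · rw [one_div]
    · rw [zero_div]

end BHaux

/-- with empirical p-values computed from (possibly overlapping)
calibration sets `Z_{D i}` of cardinality `n = ℓ m / α - 1` (with `ℓ m / α` an integer)
drawn from a common pool of i.i.d. `P0` points, BH at level `α` satisfies
`FDR ≤ m0 * α / m`. -/
theorem bh_overlapping_calibration_fdr_upper_bound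
    {Ω 𝒳 : Type*} [MeasurableSpace Ω] [MeasurableSpace 𝒳]
    (μ : Measure Ω) [IsProbabilityMeasure μ]
    (P0 : Measure 𝒳) [IsProbabilityMeasure P0]
    (m n m0 : ℕ) (hm : 0 < m) (hn : 0 < n)
    (H0 : Finset (Fin m)) (hcard : H0.card = m0)
    (a : 𝒳 → ℝ) (ha : Measurable a)
    (X : Fin m → Ω → 𝒳) (Z : ℕ → Ω → 𝒳)
    (D : Fin m → Finset ℕ) (hD : ∀ i, (D i).card = n)
    (hXmeas : ∀ i, Measurable (X i)) (hZmeas : ∀ j, Measurable (Z j))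
    (hindep : iIndepFun
      (Sum.elim X Z : Fin m ⊕ ℕ → Ω → 𝒳) μ)
    (hXlaw : ∀ i ∈ H0, μ.map (X i) = P0)
    (hZlaw : ∀ j, μ.map (Z j) = P0)
    (hatomless : ∀ r : ℝ, P0 {x | a x = r} = 0)
    (α : ℝ) (hα : α ∈ Set.Ioc (0 : ℝ) 1)
    (hcal : ∃ ℓ : ℕ, 1 ≤ ℓ ∧ (n : ℝ) = (ℓ : ℝ) * m / α - 1) :
    ∫ ω, bhFDP m α H0
        (fun i => (1 / (n : ℝ)) * ∑ u ∈ D i, if a (X i ω) ≤ a (Z u ω) then (1 : ℝ) else 0) ∂μ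
      ≤ m0 * α / m := by
  classical
  obtain ⟨hα0, hα1⟩ := hα
  obtain ⟨ℓ, hℓ1, hℓeq⟩ := hcal
  have hα0' : α ≠ 0 := ne_of_gt hα0
  have hm' : (0 : ℝ) < m := by exact_mod_cast hm
  have hn' : (0 : ℝ) < n := by exact_mod_cast hn
  have hN1 : (n : ℝ) + 1 = (ℓ : ℝ) * m / α := by rw [hℓeq]; ring
  have hNα : (ℓ : ℝ) * m = α * ((n : ℝ) + 1) := by
    rw [hN1]
    field_simp
  -- the scores as a jointly independent family
  set ξ : (Fin m ⊕ ℕ) → Ω → ℝ := fun j ω => a (Sum.elim X Z j ω) with hξdef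
  have hξmeas : ∀ j, Measurable (ξ j) := by
    intro j
    cases j with
    | inl i => exact ha.comp (hXmeas i)
    | inr u => exact ha.comp (hZmeas u)
  have hξindep : iIndepFun ξ μ :=
    hindep.comp (fun _ => a) (fun _ => ha)
  have hξlawH0 : ∀ j ∈ H0, μ.map (ξ (Sum.inl j)) = P0.map a := by
    intro j hj
    calc μ.map (ξ (Sum.inl j)) = (μ.map (X j)).map a := (Measure.map_map ha (hXmeas j)).symm
      _ = P0.map a := by rw [hXlaw j hj]
  have hξlawZ : ∀ u, μ.map (ξ (Sum.inr u)) = P0.map a := by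
    intro u
    calc μ.map (ξ (Sum.inr u)) = (μ.map (Z u)).map a := (Measure.map_map ha (hZmeas u)).symm
      _ = P0.map a := by rw [hZlaw u]
  -- the finite tuple of relevant scores
  set emb : BHaux.KT D → Fin m ⊕ ℕ := Sum.map id Subtype.val with hembdef
  have hembinj : Function.Injective emb := by
    intro k k' h
    cases k with
    | inl j => cases k' with
      | inl j' => simpa [hembdef] using h
      | inr u' => simp [hembdef] at h
    | inr u => cases k' with
      | inl j' => simp [hembdef] at h
      | inr u' =>
        simp only [hembdef, Sum.map_inr, Sum.inr.injEq] at h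
        simp [Subtype.ext h]
  -- rewrite the integrand
  have hint_eq : ∀ ω, bhFDP m α H0
      (fun i => (1 / (n : ℝ)) * ∑ u ∈ D i, if a (X i ω) ≤ a (Z u ω) then (1 : ℝ) else 0)
        = ∑ i ∈ H0, BHaux.gOf n α D i (fun k => ξ (emb k) ω) := by
    intro ω
    have hpv : (fun i => (1 / (n : ℝ)) *
        ∑ u ∈ D i, if a (X i ω) ≤ a (Z u ω) then (1 : ℝ) else 0)
          = BHaux.pvOf n D (fun k => ξ (emb k) ω) := by
      funext i'
      rw [BHaux.pvOf]
      congr 1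
      exact (Finset.sum_attach (D i')
        (fun u => if a (X i' ω) ≤ a (Z u ω) then (1 : ℝ) else 0)).symm
    rw [hpv, BHaux.bhFDP_eq_sum]
    apply Finset.sum_congr rfl
    intro i _
    rfl
  -- integrability of all the pieces
  have hmeasg : ∀ (i : Fin m) (g' : BHaux.KT D → Fin m ⊕ ℕ),
      Measurable (fun ω => BHaux.gOf n α D i (fun k => ξ (g' k) ω)) := by
    intro i g'
    exact (BHaux.gOf_measurable n α D i).comp
      (measurable_pi_lambda _ (fun k => hξmeas (g' k)))
  have hintg : ∀ (i : Fin m) (g' : BHaux.KT D → Fin m ⊕ ℕ),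
      Integrable (fun ω => BHaux.gOf n α D i (fun k => ξ (g' k) ω)) μ := by
    intro i g'
    refine Integrable.mono' (integrable_const 1) (hmeasg i g').aestronglyMeasurable ?_
    apply ae_of_all
    intro ω
    rw [Real.norm_eq_abs, abs_le]
    constructor
    · linarith [BHaux.gOf_nonneg n α D i (fun k => ξ (g' k) ω)]
    · exact BHaux.gOf_le_one hα0 hm D i _
  have hrw : (fun ω => bhFDP m α H0
      (fun i => (1 / (n : ℝ)) * ∑ u ∈ D i, if a (X i ω) ≤ a (Z u ω) then (1 : ℝ) else 0))
        = fun ω => ∑ i ∈ H0, BHaux.gOf n α D i (fun k => ξ (emb k) ω) := funext hint_eq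
  rw [hrw, integral_finset_sum H0 (fun i _ => hintg i emb)]
  -- per-null bound
  have hIi : ∀ i ∈ H0, ∫ ω, BHaux.gOf n α D i (fun k => ξ (emb k) ω) ∂μ ≤ α / m := by
    intro i hi
    set I := ∫ ω, BHaux.gOf n α D i (fun k => ξ (emb k) ω) ∂μ with hIdef
    have hmarg : ∀ (φ : Equiv.Perm (Option {u // u ∈ D i})) (k : BHaux.KT D),
        μ.map (ξ ((emb ∘ BHaux.gammaOf D i φ) k)) = μ.map (ξ (emb k)) := by
      intro φ k
      by_cases h : ∃ c, BHaux.eiOf D i c = k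
      · obtain ⟨c, rfl⟩ := h
        have hall : ∀ c', μ.map (ξ (emb (BHaux.eiOf D i c'))) = P0.map a := by
          intro c'
          cases c' with
          | none => exact hξlawH0 i hi
          | some u => exact hξlawZ u.1
        calc μ.map (ξ ((emb ∘ BHaux.gammaOf D i φ) (BHaux.eiOf D i c)))
            = μ.map (ξ (emb (BHaux.eiOf D i (φ c)))) := by
              rw [Function.comp_apply, BHaux.gammaOf_ei]
          _ = P0.map a := hall (φ c)
          _ = μ.map (ξ (emb (BHaux.eiOf D i c))) := (hall c).symm
      · rw [Function.comp_apply, BHaux.gammaOf_not D i φ (not_exists.mp h)]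
    have hstep : ∀ φ : Equiv.Perm (Option {u // u ∈ D i}),
        I = ∫ ω, BHaux.gOf n α D i (fun k => ξ ((emb ∘ BHaux.gammaOf D i φ) k) ω) ∂μ := by
      intro φ
      rw [hIdef]
      exact (BHaux.integral_tuple_congr ξ hξmeas hξindep emb (emb ∘ BHaux.gammaOf D i φ)
        hembinj (hembinj.comp (BHaux.gammaOf_injective D i φ)) (hmarg φ)
        (BHaux.gOf n α D i) (BHaux.gOf_measurable n α D i)).symm
    set P : Finset (Equiv.Perm (Option {u // u ∈ D i})) := Finset.univ with hPdef
    have hav : (P.card : ℝ) * I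
        = ∫ ω, ∑ φ ∈ P, BHaux.gOf n α D i (fun k => ξ ((emb ∘ BHaux.gammaOf D i φ) k) ω) ∂μ := by
      calc (P.card : ℝ) * I = ∑ _φ ∈ P, I := by rw [Finset.sum_const, nsmul_eq_mul]
        _ = ∑ φ ∈ P, ∫ ω, BHaux.gOf n α D i
              (fun k => ξ ((emb ∘ BHaux.gammaOf D i φ) k) ω) ∂μ :=
            Finset.sum_congr rfl (fun φ _ => hstep φ)
        _ = _ := (integral_finset_sum P
            (fun φ _ => hintg i (emb ∘ BHaux.gammaOf D i φ))).symm
    have hpoint : ∀ ω, ∑ φ ∈ P, BHaux.gOf n α D i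
        (fun k => ξ ((emb ∘ BHaux.gammaOf D i φ) k) ω) ≤ (n.factorial : ℝ) * ℓ := by
      intro ω
      exact BHaux.gOf_perm_sum_le D i hm hn hα0 ℓ hNα (hD i) (fun k => ξ (emb k) ω)
    have hIle : (P.card : ℝ) * I ≤ (n.factorial : ℝ) * ℓ := by
      rw [hav]
      calc ∫ ω, ∑ φ ∈ P, BHaux.gOf n α D i
            (fun k => ξ ((emb ∘ BHaux.gammaOf D i φ) k) ω) ∂μ
          ≤ ∫ _ω, (n.factorial : ℝ) * ℓ ∂μ := by
            apply integral_mono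
              (integrable_finset_sum P (fun φ _ => hintg i (emb ∘ BHaux.gammaOf D i φ)))
              (integrable_const _) hpoint
        _ = (n.factorial : ℝ) * ℓ := by simp
    have hcardP : (P.card : ℝ) = ((n : ℝ) + 1) * (n.factorial : ℝ) := by
      rw [hPdef, Finset.card_univ, Fintype.card_perm, Fintype.card_option,
        Fintype.card_coe, hD i, Nat.factorial_succ]
      push_cast
      ring
    have hfacpos : (0 : ℝ) < (n.factorial : ℝ) := by
      exact_mod_cast Nat.factorial_pos n
    have hαm : α / m = (ℓ : ℝ) / ((n : ℝ) + 1) := by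
      rw [div_eq_div_iff hm'.ne' (by positivity : (0:ℝ) < (n:ℝ)+1).ne']
      linarith [hNα]
    rw [hαm]
    rw [hcardP] at hIle
    rw [le_div_iff₀ (by positivity : (0:ℝ) < (n:ℝ)+1)]
    nlinarith [hIle, hfacpos]
  calc ∑ i ∈ H0, ∫ ω, BHaux.gOf n α D i (fun k => ξ (emb k) ω) ∂μ
      ≤ ∑ _i ∈ H0, α / m := Finset.sum_le_sum hIi
    _ = (H0.card : ℝ) * (α / m) := by rw [Finset.sum_const, nsmul_eq_mul]
    _ = m0 * α / m := by rw [hcard]; ring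
end

section
/- In the setting of empirical p-values with overlapping calibration sets, fix an index i and let Z_{D_i} denote the calibration score vector of p̂_i. For every nondecreasing measurable set A ⊆ [0,1]^m and every pair of score vectors z, z′ with z ⪰ z′ (componentwise), P[(p̂_1,…,p̂_m) ∈ A | Z_{D_i} = z] ≥ P[(p̂_1,…,p̂_m) ∈ A | Z_{D_i} = z′]. -/
open MeasureTheory ProbabilityTheory Finset
open scoped Classical ENNReal

/-- A set `A ⊆ ℝ^m` is nondecreasing if it is upward closed for the componentwise order. -/
def IsNondecreasingSet {m : ℕ} (A : Set (Fin m → ℝ)) : Prop :=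
  ∀ x ∈ A, ∀ y : Fin m → ℝ, (∀ j, x j ≤ y j) → y ∈ A

/-- in the overlapping-calibration setting, conditioning on the value of
the calibration vector `Z_{D i}` (by independence, this amounts to substituting fixed
points `ζ` for the coordinates of `Z` indexed by `D i`), the conditional probability that
the p-value vector belongs to a nondecreasing measurable set `A` is monotone in the
calibration scores: if `a (ζ' u) ≤ a (ζ u)` for all `u ∈ D i`, then
`P[p̂ ∈ A | Z_{D i} = ζ] ≥ P[p̂ ∈ A | Z_{D i} = ζ']`. -/
theorem overlapping_calibration_monotone_conditional
    {Ω 𝒳 : Type*} [MeasurableSpace Ω] [MeasurableSpace 𝒳]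
    (μ : Measure Ω) [IsProbabilityMeasure μ]
    (P0 : Measure 𝒳) [IsProbabilityMeasure P0]
    (m n : ℕ) (hm : 0 < m) (hn : 0 < n)
    (a : 𝒳 → ℝ) (ha : Measurable a)
    (X : Fin m → Ω → 𝒳) (Z : ℕ → Ω → 𝒳)
    (D : Fin m → Finset ℕ) (hD : ∀ i, (D i).card = n)
    (hXmeas : ∀ i, Measurable (X i)) (hZmeas : ∀ j, Measurable (Z j))
    (hindep : iIndepFun
      (Sum.elim X Z : Fin m ⊕ ℕ → Ω → 𝒳) μ)
    (hZlaw : ∀ j, μ.map (Z j) = P0)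
    (i : Fin m)
    (A : Set (Fin m → ℝ)) (hA : MeasurableSet A) (hmono : IsNondecreasingSet A)
    (ζ ζ' : ℕ → 𝒳) (hζ : ∀ u ∈ D i, a (ζ' u) ≤ a (ζ u)) :
    μ {ω | (fun j => (1 / (n : ℝ)) * ∑ u ∈ D j,
        if a (X j ω) ≤ a (if u ∈ D i then ζ' u else Z u ω) then (1 : ℝ) else 0) ∈ A}
      ≤ μ {ω | (fun j => (1 / (n : ℝ)) * ∑ u ∈ D j,
        if a (X j ω) ≤ a (if u ∈ D i then ζ u else Z u ω) then (1 : ℝ) else 0) ∈ A} := by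
  apply measure_mono
  intro ω hω
  refine hmono _ hω _ fun j => ?_
  refine mul_le_mul_of_nonneg_left (Finset.sum_le_sum fun u _ => ?_) (by positivity)
  by_cases hu : u ∈ D i
  · simp only [hu, if_true]
    by_cases h : a (X j ω) ≤ a (ζ' u)
    · simp [h, h.trans (hζ u hu)]
    · simp only [h, if_false]
      split <;> norm_num
  · simp [hu]
end

section
/- Let ((p̂_t, A_t))_{t≥1} be an i.i.d. sequence of pairs with values in [0,1] × {0,1} (A_t is the anomaly indicator). Fix an integer m ≥ 1 and a measurable function f_m : [0,1]^m → [0,1], and define blockwise (disjoint-window) thresholds ε_{d,t} = f_m(p̂_{km+1},…,p̂_{(k+1)m}) for every t ∈ {km+1,…,(k+1)m} and k ≥ 0. Assume the expected number of rejections in a block, E[Σ_{t=1}^m 1[p̂_t ≤ ε_{d,t}]], is strictly positive. Then almost surely, as T = km → ∞, the false discovery proportion FDP_1^T = (Σ_{t=1}^T 1[p̂_t ≤ ε_{d,t}](1 − A_t)) / (Σ_{t=1}^T 1[p̂_t ≤ ε_{d,t}]) converges to the modified FDR of one block: mFDR_1^m = E[Σ_{t=1}^m 1[p̂_t ≤ ε_{d,t}](1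 − A_t)] / E[Σ_{t=1}^m 1[p̂_t ≤ ε_{d,t}]]. -/
open MeasureTheory ProbabilityTheory Finset Filter
open scoped Classical ENNReal

lemma block_map_pi {Ω : Type*} [MeasurableSpace Ω] (μ : Measure Ω) [IsProbabilityMeasure μ]
    (X : ℕ → Ω → ℝ × ℝ) (hX : ∀ t, Measurable (X t))
    (hindep : iIndepFun X μ)
    {m : ℕ} (e : Fin m → ℕ) (he : Function.Injective e) :
    μ.map (fun ω (j : Fin m) => X (e j) ω) = Measure.pi (fun j => μ.map (X (e j))) := by
  have hB : Measurable (fun ω (j : Fin m) => X (e j) ω) :=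
    measurable_pi_lambda _ fun j => hX _
  refine (Measure.pi_eq fun s hs => ?_).symm
  rw [Measure.map_apply hB (MeasurableSet.univ_pi hs)]
  have hpre : (fun ω (j : Fin m) => X (e j) ω) ⁻¹' Set.pi Set.univ s
      = ⋂ j, X (e j) ⁻¹' s j := by
    ext ω; simp [Set.mem_pi]
  rw [hpre]
  set t : ℕ → Set (ℝ × ℝ) := fun n => if h : ∃ j, e j = n then s h.choose else Set.univ with ht
  have hte : ∀ j, t (e j) = s j := by
    intro j
    have h : ∃ j', e j' = e j := ⟨j, rfl⟩
    simp only [ht, dif_pos h]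
    rw [he h.choose_spec]
  have htm : ∀ n, MeasurableSet (t n) := by
    intro n
    simp only [ht]
    split
    · exact hs _
    · exact MeasurableSet.univ
  have h1 : (⋂ j, X (e j) ⁻¹' s j) = ⋂ n ∈ Finset.univ.image e, X n ⁻¹' t n := by
    ext ω
    simp only [Set.mem_iInter, Finset.mem_image, Set.mem_preimage, Finset.mem_univ, true_and]
    constructor
    · rintro h n ⟨j, rfl⟩
      rw [hte]; exact h j
    · intro h j
      have := h (e j) ⟨j, rfl⟩
      rwa [hte] at this
  rw [h1, hindep.meas_biInter (fun n _ => ⟨t n, htm n, rfl⟩)]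
  rw [Finset.prod_image (fun a _ b _ hab => he hab)]
  refine Finset.prod_congr rfl fun j _ => ?_
  rw [hte, Measure.map_apply (hX _) (hs j)]

/-- for an i.i.d. sequence of pairs `(p̂ t, A t)` and blockwise
(disjoint-window) thresholds `ε t = f (p̂ over the block of length m containing t)`, with a
strictly positive expected number of rejections per block, the false discovery proportion
`FDP_1^{km}` converges almost surely, as `k → ∞`, to the modified FDR of one block. -/
theorem fdp_tendsto_mfdr_disjoint_windows
    {Ω : Type*} [MeasurableSpace Ω] (μ : Measure Ω) [IsProbabilityMeasure μ]
    (p A : ℕ → Ω → ℝ)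
    (hmeas : ∀ t, Measurable fun ω => (p t ω, A t ω))
    (hp : ∀ t ω, p t ω ∈ Set.Icc (0 : ℝ) 1)
    (hA : ∀ t ω, A t ω = 0 ∨ A t ω = 1)
    (hindep : iIndepFun (fun t ω => (p t ω, A t ω)) μ)
    (hident : ∀ t, μ.map (fun ω => (p t ω, A t ω)) = μ.map (fun ω => (p 0 ω, A 0 ω)))
    (m : ℕ) (hm : 0 < m)
    (f : (Fin m → ℝ) → ℝ) (hf : Measurable f) (hfr : ∀ x, f x ∈ Set.Icc (0 : ℝ) 1)
    (ε : ℕ → Ω → ℝ)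
    (hε : ∀ t ω, ε t ω = f (fun j : Fin m => p (m * (t / m) + (j : ℕ)) ω))
    (hpos : 0 < ∫ ω, ∑ t ∈ Finset.range m,
        (if p t ω ≤ ε t ω then (1 : ℝ) else 0) ∂μ) :
    ∀ᵐ ω ∂μ, Tendsto
      (fun k : ℕ =>
        (∑ t ∈ Finset.range (k * m),
            (if p t ω ≤ ε t ω then (1 : ℝ) else 0) * (1 - A t ω)) /
        (∑ t ∈ Finset.range (k * m), if p t ω ≤ ε t ω then (1 : ℝ) else 0))
      atTop
      (nhds ((∫ ω', ∑ t ∈ Finset.range m,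
            (if p t ω' ≤ ε t ω' then (1 : ℝ) else 0) * (1 - A t ω') ∂μ) /
          (∫ ω', ∑ t ∈ Finset.range m,
            (if p t ω' ≤ ε t ω' then (1 : ℝ) else 0) ∂μ))) := by
  classical
  set X : ℕ → Ω → ℝ × ℝ := fun t ω => (p t ω, A t ω) with hX
  -- block random vectors
  set B : ℕ → Ω → (Fin m → ℝ × ℝ) := fun k ω j => X (m * k + (j : ℕ)) ω with hB
  have hBmeas : ∀ k, Measurable (B k) := fun k =>
    measurable_pi_lambda _ fun j => hmeas _
  have hinj : ∀ k, Function.Injective (fun j : Fin m => m * k + (j : ℕ)) := by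
    intro k a b hab
    simp only at hab
    exact Fin.val_injective (by omega)
  have hBmap : ∀ k, μ.map (B k) = Measure.pi (fun _ : Fin m => μ.map (X 0)) := by
    intro k
    rw [hB]
    rw [block_map_pi μ X hmeas hindep (fun j : Fin m => m * k + (j : ℕ)) (hinj k)]
    congr 1
    funext j
    exact hident _
  have hBid : ∀ k, IdentDistrib (B k) (B 0) μ μ := fun k =>
    ⟨(hBmeas k).aemeasurable, (hBmeas 0).aemeasurable, by rw [hBmap k, hBmap 0]⟩
  -- pairwise independence of the blocks
  have hBindep : Pairwise fun k l => IndepFun (B k) (B l) μ := by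
    intro k l hkl
    set S : Finset ℕ := Finset.univ.image (fun j : Fin m => m * k + (j : ℕ)) with hS
    set T : Finset ℕ := Finset.univ.image (fun j : Fin m => m * l + (j : ℕ)) with hT
    have hST : Disjoint S T := by
      rw [Finset.disjoint_left]
      intro n hnS hnT
      simp only [hS, hT, Finset.mem_image, Finset.mem_univ, true_and] at hnS hnT
      obtain ⟨a, ha⟩ := hnS
      obtain ⟨b, hb⟩ := hnT
      have ha' : (a : ℕ) < m := a.isLt
      have hb' : (b : ℕ) < m := b.isLt
      rcases hkl.lt_or_gt with h | h
      · have h1 : m * (k + 1) ≤ m * l := Nat.mul_le_mul_left m h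
        rw [Nat.mul_add, Nat.mul_one] at h1
        omega
      · have h1 : m * (l + 1) ≤ m * k := Nat.mul_le_mul_left m h
        rw [Nat.mul_add, Nat.mul_one] at h1
        omega
    have hbig := hindep.indepFun_finset S T hST hmeas
    have hkm : ∀ j : Fin m, m * k + (j : ℕ) ∈ S := by
      intro j; simp [hS]
    have hlm : ∀ j : Fin m, m * l + (j : ℕ) ∈ T := by
      intro j; simp [hT]
    have hφ : Measurable (fun v : { n // n ∈ S } → ℝ × ℝ =>
        fun j : Fin m => v ⟨m * k + (j : ℕ), hkm j⟩) :=
      measurable_pi_lambda _ fun j => measurable_pi_apply _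
    have hψ : Measurable (fun v : { n // n ∈ T } → ℝ × ℝ =>
        fun j : Fin m => v ⟨m * l + (j : ℕ), hlm j⟩) :=
      measurable_pi_lambda _ fun j => measurable_pi_apply _
    exact hbig.comp hφ hψ
  -- summaries of a block
  set gden : (Fin m → ℝ × ℝ) → ℝ := fun v =>
    ∑ j : Fin m, if (v j).1 ≤ f (fun i => (v i).1) then (1 : ℝ) else 0 with hgden
  set gnum : (Fin m → ℝ × ℝ) → ℝ := fun v =>
    ∑ j : Fin m, (if (v j).1 ≤ f (fun i => (v i).1) then (1 : ℝ) else 0) * (1 - (v j).2)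
    with hgnum
  have hsetm : ∀ j : Fin m, MeasurableSet
      {v : Fin m → ℝ × ℝ | (v j).1 ≤ f (fun i => (v i).1)} :=
    fun j => measurableSet_le ((measurable_pi_apply j).fst)
      (hf.comp (measurable_pi_lambda _ fun i => (measurable_pi_apply i).fst))
  have hgdenm : Measurable gden := by
    refine Finset.measurable_sum _ fun j _ => ?_
    exact Measurable.ite (hsetm j) measurable_const measurable_const
  have hgnumm : Measurable gnum := by
    refine Finset.measurable_sum _ fun j _ => ?_
    exact (Measurable.ite (hsetm j) measurable_const measurable_const).mul
      (measurable_const.sub ((measurable_pi_apply j).snd))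
  set Y : ℕ → Ω → ℝ := fun k ω => gden (B k ω) with hYdef
  set Z : ℕ → Ω → ℝ := fun k ω => gnum (B k ω) with hZdef
  have hYmeas : ∀ k, Measurable (Y k) := fun k => hgdenm.comp (hBmeas k)
  have hZmeas : ∀ k, Measurable (Z k) := fun k => hgnumm.comp (hBmeas k)
  -- pointwise description of the blocks
  have hdiv : ∀ k, ∀ j : Fin m, (k * m + (j : ℕ)) / m = k := by
    intro k j
    have hj : (j : ℕ) < m := j.isLt
    rw [Nat.add_comm, Nat.mul_comm, Nat.add_mul_div_left _ _ hm,
      Nat.div_eq_of_lt hj, Nat.zero_add]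
  have hYsum : ∀ k ω, Y k ω
      = ∑ j ∈ Finset.range m, (if p (k * m + j) ω ≤ ε (k * m + j) ω then (1 : ℝ) else 0) := by
    intro k ω
    rw [hYdef]
    simp only [hgden, hB]
    rw [← Fin.sum_univ_eq_sum_range
      (fun j => (if p (k * m + j) ω ≤ ε (k * m + j) ω then (1 : ℝ) else 0)) m]
    refine Finset.sum_congr rfl fun j _ => ?_
    rw [hε, hdiv k j]
    have hmk : m * k = k * m := Nat.mul_comm m k
    simp only [hX, hmk]
  have hZsum : ∀ k ω, Z k ω
      = ∑ j ∈ Finset.range m,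
          (if p (k * m + j) ω ≤ ε (k * m + j) ω then (1 : ℝ) else 0) * (1 - A (k * m + j) ω) := by
    intro k ω
    rw [hZdef]
    simp only [hgnum, hB]
    rw [← Fin.sum_univ_eq_sum_range
      (fun j => (if p (k * m + j) ω ≤ ε (k * m + j) ω then (1 : ℝ) else 0) * (1 - A (k * m + j) ω)) m]
    refine Finset.sum_congr rfl fun j _ => ?_
    rw [hε, hdiv k j]
    have hmk : m * k = k * m := Nat.mul_comm m k
    simp only [hX, hmk]
  -- partial sums as block sums
  have hSY : ∀ k ω, (∑ t ∈ Finset.range (k * m), if p t ω ≤ ε t ω then (1 : ℝ) else 0)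
      = ∑ i ∈ Finset.range k, Y i ω := by
    intro k ω
    induction k with
    | zero => simp
    | succ n ih =>
      rw [Nat.succ_mul, Finset.sum_range_add, ih, Finset.sum_range_succ, hYsum]
  have hSZ : ∀ k ω, (∑ t ∈ Finset.range (k * m),
        (if p t ω ≤ ε t ω then (1 : ℝ) else 0) * (1 - A t ω))
      = ∑ i ∈ Finset.range k, Z i ω := by
    intro k ω
    induction k with
    | zero => simp
    | succ n ih =>
      rw [Nat.succ_mul, Finset.sum_range_add, ih, Finset.sum_range_succ, hZsum]
  -- identification of the integrals
  have hY0 : Y 0 = fun ω => ∑ t ∈ Finset.range m, (if p t ω ≤ ε t ω then (1 : ℝ) else 0) := by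
    funext ω
    rw [hYsum 0 ω]
    simp
  have hZ0 : Z 0 = fun ω => ∑ t ∈ Finset.range m,
      (if p t ω ≤ ε t ω then (1 : ℝ) else 0) * (1 - A t ω) := by
    funext ω
    rw [hZsum 0 ω]
    simp
  -- boundedness and integrability
  have hYbound : ∀ k ω, ‖Y k ω‖ ≤ (m : ℝ) := by
    intro k ω
    rw [hYsum]
    rw [Real.norm_eq_abs]
    calc |∑ j ∈ Finset.range m, (if p (k * m + j) ω ≤ ε (k * m + j) ω then (1 : ℝ) else 0)|
        ≤ ∑ j ∈ Finset.range m, |(if p (k * m + j) ω ≤ ε (k * m + j) ω then (1 : ℝ) else 0)| :=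
          Finset.abs_sum_le_sum_abs _ _
      _ ≤ ∑ _j ∈ Finset.range m, (1 : ℝ) := by
          refine Finset.sum_le_sum fun j _ => ?_
          split <;> simp
      _ = (m : ℝ) := by simp
  have hZbound : ∀ k ω, ‖Z k ω‖ ≤ (m : ℝ) := by
    intro k ω
    rw [hZsum]
    rw [Real.norm_eq_abs]
    calc |∑ j ∈ Finset.range m,
          (if p (k * m + j) ω ≤ ε (k * m + j) ω then (1 : ℝ) else 0) * (1 - A (k * m + j) ω)|
        ≤ ∑ j ∈ Finset.range m,
          |(if p (k * m + j) ω ≤ ε (k * m + j) ω then (1 : ℝ) else 0) * (1 - A (k * m + j) ω)| :=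
          Finset.abs_sum_le_sum_abs _ _
      _ ≤ ∑ _j ∈ Finset.range m, (1 : ℝ) := by
          refine Finset.sum_le_sum fun j _ => ?_
          rw [abs_mul]
          have h1 : |(if p (k * m + j) ω ≤ ε (k * m + j) ω then (1 : ℝ) else 0)| ≤ 1 := by
            split <;> simp
          have h2 : |1 - A (k * m + j) ω| ≤ 1 := by
            rcases hA (k * m + j) ω with h | h <;> rw [h] <;> norm_num
          calc |(if p (k * m + j) ω ≤ ε (k * m + j) ω then (1 : ℝ) else 0)| * |1 - A (k * m + j) ω|
              ≤ 1 * 1 := mul_le_mul h1 h2 (abs_nonneg _) zero_le_one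
            _ = 1 := one_mul 1
      _ = (m : ℝ) := by simp
  have hYint : Integrable (Y 0) μ :=
    (integrable_const (m : ℝ)).mono' (hYmeas 0).aestronglyMeasurable
      (Filter.Eventually.of_forall (hYbound 0))
  have hZint : Integrable (Z 0) μ :=
    (integrable_const (m : ℝ)).mono' (hZmeas 0).aestronglyMeasurable
      (Filter.Eventually.of_forall (hZbound 0))
  -- strong law for Y and Z
  have hYindep : Pairwise (Function.onFun (IndepFun · · μ) Y) := by
    intro k l hkl
    exact (hBindep hkl).comp hgdenm hgdenm
  have hZindep : Pairwise (Function.onFun (IndepFun · · μ) Z) := by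
    intro k l hkl
    exact (hBindep hkl).comp hgnumm hgnumm
  have hYident : ∀ k, IdentDistrib (Y k) (Y 0) μ μ := fun k => (hBid k).comp hgdenm
  have hZident : ∀ k, IdentDistrib (Z k) (Z 0) μ μ := fun k => (hBid k).comp hgnumm
  have hYlln := strong_law_ae_real Y hYint hYindep hYident
  have hZlln := strong_law_ae_real Z hZint hZindep hZident
  -- positivity of the denominator expectation
  have hIY : (∫ ω, Y 0 ω ∂μ)
      = ∫ ω, ∑ t ∈ Finset.range m, (if p t ω ≤ ε t ω then (1 : ℝ) else 0) ∂μ := by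
    rw [hY0]
  have hIZ : (∫ ω, Z 0 ω ∂μ)
      = ∫ ω, ∑ t ∈ Finset.range m,
          (if p t ω ≤ ε t ω then (1 : ℝ) else 0) * (1 - A t ω) ∂μ := by
    rw [hZ0]
  have hdenpos : 0 < ∫ ω, Y 0 ω ∂μ := by rw [hIY]; exact hpos
  filter_upwards [hYlln, hZlln] with ω hYω hZω
  have hdiv2 : Tendsto (fun k : ℕ =>
      (∑ i ∈ Finset.range k, Z i ω) / (∑ i ∈ Finset.range k, Y i ω)) atTop
      (nhds ((∫ ω', Z 0 ω' ∂μ) / (∫ ω', Y 0 ω' ∂μ))) := by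
    have h := hZω.div hYω (ne_of_gt hdenpos)
    refine h.congr' ?_
    filter_upwards [eventually_ge_atTop 1] with n hn
    have hn' : (n : ℝ) ≠ 0 := Nat.cast_ne_zero.mpr (by omega)
    simp only [Pi.div_apply]
    rw [div_div_div_cancel_right₀ hn']
  have hfun : (fun k : ℕ =>
      (∑ t ∈ Finset.range (k * m),
          (if p t ω ≤ ε t ω then (1 : ℝ) else 0) * (1 - A t ω)) /
      (∑ t ∈ Finset.range (k * m), if p t ω ≤ ε t ω then (1 : ℝ) else 0))
      = fun k : ℕ =>
      (∑ i ∈ Finset.range k, Z i ω) / (∑ i ∈ Finset.range k, Y i ω) := by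
    funext k
    rw [hSZ, hSY]
  rw [hfun, ← hIZ, ← hIY]
  exact hdiv2
end
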